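/- arXiv:1408.0849 — 3 statements merged into one kernel-verified Lean document; each statement's English description precedes it below -/
import Mathlib

section
/- If A and B are compact H-hulls with A ⊆ B, then hcap(B) = hcap(A) + hcap(g_A(B \ A)). -/
open Set Filter

/-- The upper half plane `ℍ`. -/
def UpperHalf : Set ℂ := {z | 0 < z.im}

/-- The filter of neighbourhoods of infinity in `ℂ`. -/
noncomputable def atInftyC : Filter ℂ := Filter.comap (fun z : ℂ => ‖z‖) Filter.atTop

/-- A compact `ℍ`-hull: a bounded subset `A ⊆ ℍ` with `A = cl(A) ∩ ℍ` and `ℍ \ A`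
simply connected. -/
def IsHHull (A : Set ℂ) : Prop :=
  Bornology.IsBounded A ∧ A ⊆ UpperHalf ∧ A = closure A ∩ UpperHalf ∧
    SimplyConnectedSpace ↥(UpperHalf \ A)

/-- `g` is the mapping-out conformal map of the hull `A`: a conformal bijection
`ℍ \ A → ℍ` with `g(z) − z → 0` as `z → ∞`. -/
def IsMapOut (A : Set ℂ) (g : ℂ → ℂ) : Prop :=
  DifferentiableOn ℂ g (UpperHalf \ A) ∧ Set.InjOn g (UpperHalf \ A) ∧
    g '' (UpperHalf \ A) = UpperHalf ∧
    Tendsto (fun z => g z - z) (atInftyC ⊓ Filter.principal (UpperHalf \ A)) (nhds 0)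

/-- `A` has half-plane capacity `c`: `c = lim_{z→∞} z (g_A(z) − z)` for the
mapping-out function `g_A` of `A`. -/
def HasHcap (A : Set ℂ) (c : ℝ) : Prop :=
  ∃ g : ℂ → ℂ, IsMapOut A g ∧
    Tendsto (fun z => z * (g z - z)) (atInftyC ⊓ Filter.principal (UpperHalf \ A)) (nhds (c : ℂ))

lemma isOpen_upperHalf : IsOpen UpperHalf :=
  isOpen_Ioi.preimage Complex.continuous_im

/-- membership criterion for eventual properties along `atInftyC ⊓ 𝓟 S`. -/
lemma eventually_atInfty_inf {S : Set ℂ} {p : ℂ → Prop} :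
    (∀ᶠ z in atInftyC ⊓ Filter.principal S, p z) ↔
      ∃ M : ℝ, ∀ z ∈ S, M ≤ ‖z‖ → p z := by
  constructor
  · intro h
    rw [eventually_inf_principal] at h
    rw [atInftyC, eventually_comap] at h
    rw [eventually_atTop] at h
    obtain ⟨M, hM⟩ := h
    exact ⟨M, fun z hz habs => hM (‖z‖) habs z rfl hz⟩
  · rintro ⟨M, hM⟩
    rw [eventually_inf_principal, atInftyC, eventually_comap, eventually_atTop]
    exact ⟨M, fun b hb z hz hzS => hM z hzS (hz ▸ hb)⟩

lemma abs_tendsto_atTop (S : Set ℂ) :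
    Tendsto (fun z : ℂ => ‖z‖) (atInftyC ⊓ Filter.principal S) atTop :=
  tendsto_comap.mono_left inf_le_left

lemma imag_point_mem {S : Set ℂ} {R : ℝ} (hSR : S ⊆ Metric.closedBall 0 R) {t : ℝ}
    (ht : 0 < t) (htR : R < t) : (t : ℂ) * Complex.I ∈ UpperHalf \ S := by
  constructor
  · simpa [UpperHalf] using ht
  · intro hmem
    have := hSR hmem
    simp only [Metric.mem_closedBall, Complex.dist_eq, sub_zero] at this
    rw [norm_mul, Complex.norm_I, mul_one, Complex.norm_real, Real.norm_eq_abs, abs_of_pos ht] at this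
    linarith

lemma neBot_atInfty_inf {S : Set ℂ} (hS : Bornology.IsBounded S) :
    (atInftyC ⊓ Filter.principal (UpperHalf \ S)).NeBot := by
  obtain ⟨R, hR⟩ := hS.subset_closedBall 0
  rw [neBot_iff]
  intro h
  have : (∀ᶠ z in atInftyC ⊓ Filter.principal (UpperHalf \ S), False) := by
    rw [h]; exact eventually_bot
  rw [eventually_atInfty_inf] at this
  obtain ⟨M, hM⟩ := this
  set t := max (max M R) 0 + 1 with ht
  have ht0 : 0 < t := by positivity
  refine hM ((t:ℂ) * Complex.I) (imag_point_mem hR ht0 ?_) ?_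
  · have : R ≤ max (max M R) 0 := le_trans (le_max_right M R) (le_max_left _ _); linarith
  · rw [norm_mul, Complex.norm_I, mul_one, Complex.norm_real, Real.norm_eq_abs, abs_of_pos ht0]
    have : M ≤ max (max M R) 0 := le_trans (le_max_left M R) (le_max_left _ _); linarith

variable {S : Set ℂ} {g : ℂ → ℂ}

/-- quantitative asymptotics from the tendsto hypothesis -/
lemma mapout_asymp (hg : IsMapOut S g) {ε : ℝ} (hε : 0 < ε) :
    ∃ M : ℝ, ∀ z ∈ UpperHalf \ S, M ≤ ‖z‖ → ‖g z - z‖ ≤ ε := by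
  have h := hg.2.2.2
  rw [Metric.tendsto_nhds] at h
  have h2 := h ε hε
  rw [eventually_atInfty_inf] at h2
  obtain ⟨M, hM⟩ := h2
  exact ⟨M, fun z hz habs => by
    have := hM z hz habs
    rw [Complex.dist_eq, sub_zero] at this
    exact le_of_lt this⟩

lemma mapout_mem_upper (hg : IsMapOut S g) {z : ℂ} (hz : z ∈ UpperHalf \ S) :
    g z ∈ UpperHalf := hg.2.2.1 ▸ Set.mem_image_of_mem g hz

/-- the open-mapping property of a mapping-out function -/
lemma isOpen_hull_compl (hScl : S = closure S ∩ UpperHalf) : IsOpen (UpperHalf \ S) := by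
  have : UpperHalf \ S = UpperHalf \ closure S := by
    ext z
    simp only [mem_diff]
    refine and_congr_right fun hz => not_congr ?_
    constructor
    · intro hzS; exact subset_closure hzS
    · intro hzc; rw [hScl]; exact ⟨hzc, hz⟩
  rw [this]
  exact isOpen_upperHalf.sdiff isClosed_closure

lemma mapout_isOpenMap (hS : Bornology.IsBounded S) (hΩ : IsOpen (UpperHalf \ S))
    (hconn : IsPreconnected (UpperHalf \ S)) (hg : IsMapOut S g) :
    ∀ s ⊆ UpperHalf \ S, IsOpen s → IsOpen (g '' s) := by
  obtain ⟨R, hR⟩ := hS.subset_closedBall 0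
  have han : AnalyticOnNhd ℂ g (UpperHalf \ S) := hg.1.analyticOnNhd hΩ
  rcases han.is_constant_or_isOpen hconn with ⟨w, hw⟩ | h
  · exfalso
    set t := max R 0 + 1 with ht
    have hRt : R < t := by have := le_max_left R 0; simp only [ht]; linarith
    have ht0 : 0 < t := by positivity
    have h1 : (t:ℂ) * Complex.I ∈ UpperHalf \ S := imag_point_mem hR ht0 hRt
    have h2 : ((t+1:ℝ):ℂ) * Complex.I ∈ UpperHalf \ S := imag_point_mem hR (by linarith) (by linarith)
    have heq : ((t:ℂ) * Complex.I) = ((t+1:ℝ):ℂ) * Complex.I :=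
      hg.2.1 h1 h2 ((hw _ h1).trans (hw _ h2).symm)
    have h3 : (t:ℂ) = ((t+1:ℝ):ℂ) := mul_right_cancel₀ Complex.I_ne_zero heq
    have h4 : t = t + 1 := by exact_mod_cast h3
    linarith
  · exact h

/-- the inverse map: continuity on `UpperHalf`. -/
lemma mapout_inv_continuousOn (hS : Bornology.IsBounded S) (hΩ : IsOpen (UpperHalf \ S))
    (hconn : IsPreconnected (UpperHalf \ S)) (hg : IsMapOut S g) :
    ContinuousOn (Function.invFunOn g (UpperHalf \ S)) UpperHalf := by
  set Ω := UpperHalf \ S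
  set ψ := Function.invFunOn g Ω with hψ
  have hsurj : ∀ w ∈ UpperHalf, ψ w ∈ Ω ∧ g (ψ w) = w := by
    intro w hw
    have : ∃ z ∈ Ω, g z = w := by
      rw [← hg.2.2.1] at hw; obtain ⟨z, hz, hzw⟩ := hw; exact ⟨z, hz, hzw⟩
    exact ⟨Function.invFunOn_mem this, Function.invFunOn_eq this⟩
  rw [continuousOn_iff']
  intro t ht
  refine ⟨g '' (t ∩ Ω), mapout_isOpenMap hS hΩ hconn hg _ inter_subset_right (ht.inter hΩ), ?_⟩
  ext w
  simp only [mem_inter_iff, mem_preimage, mem_image]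
  constructor
  · rintro ⟨hwt, hwU⟩
    exact ⟨⟨ψ w, ⟨hwt, (hsurj w hwU).1⟩, (hsurj w hwU).2⟩, hwU⟩
  · rintro ⟨⟨z, ⟨hzt, hzΩ⟩, rfl⟩, hgU⟩
    refine ⟨?_, hgU⟩
    have : ψ (g z) = z := hg.2.1.leftInvOn_invFunOn hzΩ
    rw [this]; exact hzt

/-- preconnectedness of the region above radius `r` in the upper half plane -/
lemma isPreconnected_V {r : ℝ} (hr : 0 < r) :
    IsPreconnected {w : ℂ | 0 < w.im ∧ r < ‖w‖} := by
  have hconv : Convex ℝ {z : ℂ | Real.log r < z.re ∧ 0 < z.im ∧ z.im < Real.pi} := by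
    refine Convex.inter (convex_halfSpace_re_gt _) (Convex.inter ?_ ?_)
    · exact convex_halfSpace_im_gt 0
    · exact convex_halfSpace_im_lt _
  have himg : Complex.exp '' {z : ℂ | Real.log r < z.re ∧ 0 < z.im ∧ z.im < Real.pi}
      = {w : ℂ | 0 < w.im ∧ r < ‖w‖} := by
    ext w
    simp only [mem_image, mem_setOf_eq]
    constructor
    · rintro ⟨z, ⟨h1, h2, h3⟩, rfl⟩
      constructor
      · rw [Complex.exp_im]
        exact mul_pos (Real.exp_pos _) (Real.sin_pos_of_pos_of_lt_pi h2 h3)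
      · rw [Complex.norm_exp]
        calc r = Real.exp (Real.log r) := (Real.exp_log hr).symm
        _ < Real.exp z.re := Real.exp_lt_exp.mpr h1
    · rintro ⟨h1, h2⟩
      have habs : 0 < ‖w‖ := lt_trans hr h2
      refine ⟨(Real.log (‖w‖) : ℂ) + (Complex.arg w : ℂ) * Complex.I, ⟨?_, ?_, ?_⟩, ?_⟩
      · simpa using Real.log_lt_log hr h2
      · have h0 : 0 ≤ w.arg := Complex.arg_nonneg_iff.mpr (le_of_lt h1)
        rcases lt_or_eq_of_le h0 with h | h
        · simpa using h
        · exfalso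
          have := Complex.arg_eq_zero_iff.mp h.symm
          linarith [this.2]
      · have hle : w.arg ≤ Real.pi := Complex.arg_le_pi w
        rcases lt_or_eq_of_le hle with h | h
        · simpa using h
        · exfalso
          have := Complex.arg_eq_pi_iff.mp h
          linarith [this.2]
      · rw [Complex.exp_add, ← Complex.ofReal_exp, Real.exp_log habs]
        exact Complex.norm_mul_exp_arg_mul_I w
  rw [← himg]
  exact (hconv.isPreconnected).image _ (Complex.continuous_exp.continuousOn)

/-- properness: a mapping-out function maps bounded regions to bounded regions. -/
lemma mapout_proper (hS : Bornology.IsBounded S) (hΩ : IsOpen (UpperHalf \ S))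
    (hconn : IsPreconnected (UpperHalf \ S)) (hg : IsMapOut S g) :
    ∃ M₀ : ℝ, 1 ≤ M₀ ∧ ∀ M', M₀ ≤ M' → ∀ z ∈ UpperHalf \ S, ‖z‖ ≤ M' →
      ‖g z‖ ≤ M' + 1 := by
  set Ω := UpperHalf \ S
  obtain ⟨M₁, hM₁⟩ := mapout_asymp hg one_pos
  obtain ⟨R, hR⟩ := hS.subset_closedBall 0
  refine ⟨max (max M₁ R) 0 + 1, by linarith [le_max_right (max M₁ R) 0], ?_⟩
  intro M' hM' z hz hzM
  have hM'1 : M₁ ≤ M' := by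
    have := le_max_left M₁ R; have := le_max_left (max M₁ R) 0; linarith
  have hM'R : R < M' := by
    have := le_max_right M₁ R; have := le_max_left (max M₁ R) 0; linarith
  have hM'0 : 1 ≤ M' := by
    have := le_max_right (max M₁ R) 0; linarith
  -- the "arc" estimate
  have harc : ∀ z' ∈ Ω, ‖z'‖ = M' → ‖g z'‖ ≤ M' + 1 := by
    intro z' hz' he
    have h1 : ‖g z' - z'‖ ≤ 1 := hM₁ z' hz' (he ▸ hM'1)
    calc ‖g z'‖ = ‖z' + (g z' - z')‖ := by ring_nf
    _ ≤ ‖z'‖ + ‖g z' - z'‖ := norm_add_le _ _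
    _ ≤ M' + 1 := by rw [he]; linarith
  rcases eq_or_lt_of_le hzM with heq | hlt
  · exact harc z hz heq
  -- now `z` is in the open ball; show `g z` avoids `V`
  by_contra hcon
  push_neg at hcon
  set V := {w : ℂ | 0 < w.im ∧ M' + 1 < ‖w‖} with hV
  have hgzV : g z ∈ V := ⟨(mapout_mem_upper hg hz : g z ∈ UpperHalf), hcon⟩
  set S₁ := g '' (Ω ∩ Metric.ball 0 M') with hS₁
  set S₂ := g '' (Ω \ Metric.closedBall 0 M') with hS₂
  have hS₁o : IsOpen S₁ := mapout_isOpenMap hS hΩ hconn hg _ inter_subset_left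
    (hΩ.inter Metric.isOpen_ball)
  have hS₂o : IsOpen S₂ := mapout_isOpenMap hS hΩ hconn hg _ diff_subset
    (hΩ.sdiff Metric.isClosed_closedBall)
  have hVsub : V ⊆ S₁ ∪ S₂ := by
    intro w hw
    have hwU : w ∈ UpperHalf := hw.1
    rw [← hg.2.2.1] at hwU
    obtain ⟨z', hz', rfl⟩ := hwU
    rcases lt_trichotomy (‖z'‖) M' with h | h | h
    · exact Or.inl ⟨z', ⟨hz', by simpa [Complex.dist_eq] using h⟩, rfl⟩
    · exact absurd (harc z' hz' h) (by push_neg; exact lt_of_lt_of_le (by linarith [hw.2]) le_rfl)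
    · refine Or.inr ⟨z', ⟨hz', ?_⟩, rfl⟩
      simp only [Metric.mem_closedBall, Complex.dist_eq, sub_zero, not_le]
      exact h
  have hne1 : (V ∩ S₁).Nonempty :=
    ⟨g z, hgzV, ⟨z, ⟨hz, by simpa [Complex.dist_eq] using hlt⟩, rfl⟩⟩
  have hne2 : (V ∩ S₂).Nonempty := by
    set t := M' + 3 with htdef
    have ht0 : 0 < t := by linarith
    have hmem : (t : ℂ) * Complex.I ∈ Ω := imag_point_mem hR ht0 (by linarith)
    have habs : ‖(t:ℂ) * Complex.I‖ = t := by
      rw [norm_mul, Complex.norm_I, mul_one, Complex.norm_real, Real.norm_eq_abs, abs_of_pos ht0]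
    have hnb : (t:ℂ) * Complex.I ∉ Metric.closedBall 0 M' := by
      simp only [Metric.mem_closedBall, Complex.dist_eq, sub_zero, not_le]
      rw [habs]; linarith
    have h1 : ‖g ((t:ℂ)*Complex.I) - (t:ℂ)*Complex.I‖ ≤ 1 :=
      hM₁ _ hmem (by rw [habs]; linarith)
    have h2 : t - ‖g ((t:ℂ)*Complex.I)‖ ≤ 1 := by
      have h3 := norm_sub_norm_le ((t:ℂ)*Complex.I) (g ((t:ℂ)*Complex.I))
      rw [habs, norm_sub_rev] at h3
      linarith
    exact ⟨g ((t:ℂ) * Complex.I), ⟨(mapout_mem_upper hg hmem : _ ∈ UpperHalf), by linarith⟩,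
      ⟨(t:ℂ) * Complex.I, ⟨hmem, hnb⟩, rfl⟩⟩
  have hVpre : IsPreconnected V := isPreconnected_V (by linarith : (0:ℝ) < M' + 1)
  obtain ⟨w, hwV, hw1, hw2⟩ := hVpre S₁ S₂ hS₁o hS₂o hVsub hne1 hne2
  obtain ⟨a, ha, hae⟩ := hw1
  obtain ⟨b, hb, hbe⟩ := hw2
  have hab : a = b := hg.2.1 ha.1 hb.1 (hae.trans hbe.symm)
  have h1 : ‖a‖ < M' := by simpa [Complex.dist_eq] using ha.2
  have h2 : ¬ ‖b‖ ≤ M' := by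
    simpa [Metric.mem_closedBall, Complex.dist_eq] using hb.2
  rw [hab] at h1; exact h2 (le_of_lt h1)

lemma mapout_im_sub_le (hS : Bornology.IsBounded S) (hΩ : IsOpen (UpperHalf \ S))
    (hconn : IsPreconnected (UpperHalf \ S)) {g₁ g₂ : ℂ → ℂ}
    (hg₁ : IsMapOut S g₁) (hg₂ : IsMapOut S g₂) :
    ∀ z ∈ UpperHalf \ S, (g₁ z - g₂ z).im ≤ 0 := by
  set Ω := UpperHalf \ S with hΩdef
  intro zs hzs
  by_contra hcon
  push_neg at hcon
  have hg1up : 0 < (g₁ zs).im := mapout_mem_upper hg₁ hzs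
  set ε : ℝ := min ((g₁ zs - g₂ zs).im / 2) ((g₁ zs).im / 2) with hεdef
  have hε : 0 < ε := lt_min (by linarith) (by linarith)
  have hεd : ε < (g₁ zs - g₂ zs).im := lt_of_le_of_lt (min_le_left _ _) (by linarith)
  have hεim : ε < (g₁ zs).im := lt_of_le_of_lt (min_le_right _ _) (by linarith)
  -- we will show `(g₁ zs - g₂ zs).im ≤ ε`, a contradiction
  suffices hclaim : (g₁ zs - g₂ zs).im ≤ ε by linarith
  obtain ⟨Mε1, hMε1⟩ := mapout_asymp hg₁ (half_pos hε)
  obtain ⟨Mε2, hMε2⟩ := mapout_asymp hg₂ (half_pos hε)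
  obtain ⟨M₀, hM₀1, hM₀⟩ := mapout_proper hS hΩ hconn hg₁
  set M' : ℝ := max (max Mε1 Mε2) (max M₀ (‖zs‖ + 1)) with hM'def
  have hM'0 : M₀ ≤ M' := le_trans (le_max_left _ _) (le_max_right _ _)
  have hM'e1 : Mε1 ≤ M' := le_trans (le_max_left _ _) (le_max_left _ _)
  have hM'e2 : Mε2 ≤ M' := le_trans (le_max_right _ _) (le_max_left _ _)
  have hM'z : ‖zs‖ < M' :=
    lt_of_lt_of_le (by linarith) (le_trans (le_max_right M₀ _) (le_max_right _ _))
  set ψ := Function.invFunOn g₁ Ω with hψdef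
  have hψc : ContinuousOn ψ UpperHalf := mapout_inv_continuousOn hS hΩ hconn hg₁
  set K : Set ℂ := Metric.closedBall 0 (M' + 1) ∩ {w : ℂ | ε ≤ w.im} with hKdef
  have hKcpt : IsCompact K :=
    (isCompact_closedBall 0 (M' + 1)).inter_right
      (isClosed_le continuous_const Complex.continuous_im)
  have hKsub : K ⊆ UpperHalf := fun w hw => lt_of_lt_of_le hε hw.2
  set K' := ψ '' K with hK'def
  have hK'cpt : IsCompact K' := hKcpt.image_of_continuousOn (hψc.mono hKsub)
  have hK'Ω : K' ⊆ Ω := by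
    rintro z ⟨w, hw, rfl⟩
    have : ∃ a ∈ Ω, g₁ a = w := by
      have := hKsub hw; rw [← hg₁.2.2.1] at this
      obtain ⟨a, ha, hae⟩ := this; exact ⟨a, ha, hae⟩
    exact Function.invFunOn_mem this
  set U' : Set ℂ := (Ω ∩ g₁ ⁻¹' {w : ℂ | ε < w.im}) ∩ Metric.ball 0 M' with hU'def
  have hU'open : IsOpen U' :=
    (hg₁.1.continuousOn.isOpen_inter_preimage hΩ
      (isOpen_lt continuous_const Complex.continuous_im)).inter Metric.isOpen_ball
  have hzsU' : zs ∈ U' :=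
    ⟨⟨hzs, hεim⟩, by simpa [Complex.dist_eq] using hM'z⟩
  have hU'K' : U' ⊆ K' := by
    rintro z ⟨⟨hzΩ, hzpre⟩, hzball⟩
    have hzM : ‖z‖ ≤ M' := le_of_lt (by simpa [Complex.dist_eq] using hzball)
    have h1 : ‖g₁ z‖ ≤ M' + 1 := hM₀ M' hM'0 z hzΩ hzM
    have hzpre' : ε < (g₁ z).im := hzpre
    have hgK : g₁ z ∈ K :=
      ⟨by simpa [Complex.dist_eq] using h1, show ε ≤ (g₁ z).im from le_of_lt hzpre'⟩
    exact ⟨g₁ z, hgK, hg₁.2.1.leftInvOn_invFunOn hzΩ⟩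
  have hclos : closure U' ⊆ K' := closure_minimal hU'K' hK'cpt.isClosed
  have hclosΩ : closure U' ⊆ Ω := subset_trans hclos hK'Ω
  set k : ℂ → ℂ := fun z => Complex.exp (-Complex.I * (g₁ z - g₂ z)) with hkdef
  have hknorm : ∀ z : ℂ, ‖k z‖ = Real.exp ((g₁ z - g₂ z).im) := by
    intro z
    rw [hkdef, Complex.norm_exp]
    congr 1
    simp [Complex.mul_re]
  have hkdiff : DifferentiableOn ℂ k Ω :=
    (((differentiableOn_const _).mul (hg₁.1.sub hg₂.1))).cexp
  have hbd : Bornology.IsBounded U' :=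
    (Metric.isBounded_ball).subset inter_subset_right
  have hdc : DiffContOnCl ℂ k U' :=
    ⟨hkdiff.mono (subset_trans inter_subset_left inter_subset_left),
      hkdiff.continuousOn.mono hclosΩ⟩
  have hfront : ∀ w ∈ frontier U', ‖k w‖ ≤ Real.exp ε := by
    intro w hw
    have hwcl : w ∈ closure U' := frontier_subset_closure hw
    have hwΩ : w ∈ Ω := hclosΩ hwcl
    have hwn : w ∉ U' := by
      rw [hU'open.frontier_eq] at hw; exact hw.2
    have hgwK : g₁ w ∈ K := by
      obtain ⟨w', hw', he⟩ := hclos hwcl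
      have hsur : ∃ a ∈ Ω, g₁ a = w' := by
        have := hKsub hw'; rw [← hg₁.2.2.1] at this
        obtain ⟨a, ha, hae⟩ := this; exact ⟨a, ha, hae⟩
      rw [← he, Function.invFunOn_eq hsur]; exact hw'
    have habsle : ‖w‖ ≤ M' := by
      have : closure U' ⊆ Metric.closedBall 0 M' :=
        closure_minimal (subset_trans inter_subset_right Metric.ball_subset_closedBall)
          Metric.isClosed_closedBall
      simpa [Complex.dist_eq] using this hwcl
    rw [hknorm, Real.exp_le_exp]
    rcases Classical.em (ε < (g₁ w).im ∧ ‖w‖ < M') with hcase | hcase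
    · exact absurd ⟨⟨hwΩ, hcase.1⟩, by simpa [Complex.dist_eq] using hcase.2⟩ hwn
    · rw [not_and_or] at hcase
      rcases hcase with hcase | hcase
      · push_neg at hcase
        have him2 : 0 < (g₂ w).im := mapout_mem_upper hg₂ hwΩ
        rw [Complex.sub_im]
        linarith
      · push_neg at hcase
        have habs : ‖w‖ = M' := le_antisymm habsle hcase
        have h1 : ‖g₁ w - w‖ ≤ ε / 2 := hMε1 w hwΩ (by rw [habs]; exact hM'e1)
        have h2 : ‖g₂ w - w‖ ≤ ε / 2 := hMε2 w hwΩ (by rw [habs]; exact hM'e2)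
        have h3 : ‖g₁ w - g₂ w‖ ≤ ε := by
          have : g₁ w - g₂ w = (g₁ w - w) - (g₂ w - w) := by ring
          rw [this]
          calc ‖(g₁ w - w) - (g₂ w - w)‖
              ≤ ‖g₁ w - w‖ + ‖g₂ w - w‖ := by
                have := norm_sub_le (g₁ w - w) (g₂ w - w)
                simpa using this
          _ ≤ ε := by linarith
        calc (g₁ w - g₂ w).im ≤ |(g₁ w - g₂ w).im| := le_abs_self _
        _ ≤ ‖g₁ w - g₂ w‖ := Complex.abs_im_le_norm _
        _ ≤ ε := h3
  have := Complex.norm_le_of_forall_mem_frontier_norm_le hbd hdc hfront (subset_closure hzsU')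
  rw [hknorm, Real.exp_le_exp] at this
  exact this

/-- Uniqueness of mapping-out functions. -/
lemma mapout_unique (hS : Bornology.IsBounded S) (hΩ : IsOpen (UpperHalf \ S))
    (hconn : IsPreconnected (UpperHalf \ S)) {g₁ g₂ : ℂ → ℂ}
    (hg₁ : IsMapOut S g₁) (hg₂ : IsMapOut S g₂) :
    Set.EqOn g₁ g₂ (UpperHalf \ S) := by
  set Ω := UpperHalf \ S with hΩdef
  have him0 : ∀ z ∈ Ω, (g₁ z - g₂ z).im = 0 := by
    intro z hz
    have h1 := mapout_im_sub_le hS hΩ hconn hg₁ hg₂ z hz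
    have h2 := mapout_im_sub_le hS hΩ hconn hg₂ hg₁ z hz
    rw [Complex.sub_im] at h1 h2 ⊢
    linarith
  set u : ℂ → ℂ := fun z => g₁ z - g₂ z with hudef
  have hu : AnalyticOnNhd ℂ u Ω := (hg₁.1.sub hg₂.1).analyticOnNhd hΩ
  rcases hu.is_constant_or_isOpen hconn with ⟨w, hw⟩ | hopen
  · -- constant; the constant must be 0
    have hne : (atInftyC ⊓ Filter.principal Ω).NeBot := neBot_atInfty_inf hS
    have ht1 : Tendsto u (atInftyC ⊓ Filter.principal Ω) (nhds 0) := by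
      have := (hg₁.2.2.2).sub (hg₂.2.2.2)
      simp only [sub_zero] at this
      refine this.congr fun z => by show (g₁ z - z) - (g₂ z - z) = g₁ z - g₂ z; ring
    have ht2 : Tendsto u (atInftyC ⊓ Filter.principal Ω) (nhds w) := by
      refine Tendsto.congr' ?_ tendsto_const_nhds
      filter_upwards [mem_inf_of_right (mem_principal_self Ω)] with z hz
      exact (hw z hz).symm
    have hw0 : w = 0 := tendsto_nhds_unique ht2 ht1
    intro z hz
    have := hw z hz
    rw [hw0] at this
    exact sub_eq_zero.mp this
  · -- open image contradicts purely real values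
    exfalso
    obtain ⟨R, hR⟩ := hS.subset_closedBall 0
    have ht0 : (0:ℝ) < max R 0 + 1 := by positivity
    have hz₀ : ((max R 0 + 1 : ℝ):ℂ) * Complex.I ∈ Ω :=
      imag_point_mem hR ht0 (by linarith [le_max_left R 0])
    have hio : IsOpen (u '' Ω) := hopen Ω (subset_refl _) hΩ
    obtain ⟨r, hr, hball⟩ := Metric.isOpen_iff.mp hio _ (mem_image_of_mem u hz₀)
    have hmem : u (((max R 0 + 1 : ℝ):ℂ) * Complex.I) + (r/2 : ℝ) * Complex.I ∈ u '' Ω := by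
      apply hball
      simp only [Metric.mem_ball, Complex.dist_eq]
      rw [add_sub_cancel_left, norm_mul, Complex.norm_I, mul_one, Complex.norm_real, Real.norm_eq_abs]
      rw [abs_of_pos (by linarith)]
      linarith
    obtain ⟨z', hz', he⟩ := hmem
    have h1 : (u z').im = 0 := him0 z' hz'
    have h2 : (u (((max R 0 + 1 : ℝ):ℂ) * Complex.I)).im = 0 := him0 _ hz₀
    rw [he] at h1
    simp only [Complex.add_im, Complex.mul_im, Complex.ofReal_re, Complex.I_im,
      Complex.ofReal_im, Complex.I_re] at h1
    rw [h2] at h1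
    simp at h1
    linarith

lemma hull_preconnected {A : Set ℂ} (hA : IsHHull A) : IsPreconnected (UpperHalf \ A) := by
  have h := hA.2.2.2
  letI := h
  have h1 : PathConnectedSpace ↥(UpperHalf \ A) := inferInstance
  have h2 : IsPathConnected (UpperHalf \ A) := by
    rw [isPathConnected_iff_pathConnectedSpace]
    exact h1
  exact h2.isConnected.isPreconnected


/-- if `A ⊆ B` are compact `ℍ`-hulls and `g_A` is the mapping-out
function of `A`, then `hcap(B) = hcap(A) + hcap(g_A(B \ A))`. -/
theorem hcap_add (A B : Set ℂ) (hA : IsHHull A) (hB : IsHHull B) (hAB : A ⊆ B)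
    (gA : ℂ → ℂ) (hgA : IsMapOut A gA)
    (cA cB cC : ℝ)
    (hcA : HasHcap A cA) (hcB : HasHcap B cB) (hcC : HasHcap (gA '' (B \ A)) cC) :
    cB = cA + cC := by
  obtain ⟨g, hg, hglim⟩ := hcA
  obtain ⟨gB, hgB, hgBlim⟩ := hcB
  obtain ⟨h, hh, hhlim⟩ := hcC
  set C : Set ℂ := gA '' (B \ A) with hCdef
  set lA := atInftyC ⊓ Filter.principal (UpperHalf \ A) with hlAdef
  set lB := atInftyC ⊓ Filter.principal (UpperHalf \ B) with hlBdef
  set lC := atInftyC ⊓ Filter.principal (UpperHalf \ C) with hlCdef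
  have hΩA : IsOpen (UpperHalf \ A) := isOpen_hull_compl hA.2.2.1
  have hΩB : IsOpen (UpperHalf \ B) := isOpen_hull_compl hB.2.2.1
  have hconnA : IsPreconnected (UpperHalf \ A) := hull_preconnected hA
  have hconnB : IsPreconnected (UpperHalf \ B) := hull_preconnected hB
  have hΩBA : UpperHalf \ B ⊆ UpperHalf \ A := fun z hz => ⟨hz.1, fun hmem => hz.2 (hAB hmem)⟩
  have hsubl : lB ≤ lA := inf_le_inf_left _ (principal_mono.mpr hΩBA)
  have hBA : B \ A ⊆ UpperHalf \ A := fun z hz => ⟨hB.2.1 hz.1, hz.2⟩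
  have hdecomp : UpperHalf \ B = (UpperHalf \ A) \ (B \ A) := by
    ext z
    simp only [mem_diff]
    constructor
    · rintro ⟨h1, h2⟩
      exact ⟨⟨h1, fun hz => h2 (hAB hz)⟩, fun hz => h2 hz.1⟩
    · rintro ⟨⟨h1, h2⟩, h3⟩
      refine ⟨h1, fun hz => h3 ⟨hz, h2⟩⟩
  have himgΩ : gA '' (UpperHalf \ B) = UpperHalf \ C := by
    rw [hdecomp, hgA.2.1.image_diff_subset hBA, hgA.2.2.1]
  have hmapsTo : ∀ z ∈ UpperHalf \ B, gA z ∈ UpperHalf \ C := by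
    intro z hz
    rw [← himgΩ]
    exact mem_image_of_mem gA hz
  -- the push-forward of the filter
  obtain ⟨M₁, hM₁⟩ := mapout_asymp hgA one_pos
  have hABtend : Tendsto (fun z => gA z - z) lB (nhds 0) := (hgA.2.2.2).mono_left hsubl
  have habs_lower : ∀ᶠ z in lB, ‖z‖ - 1 ≤ ‖gA z‖ := by
    rw [hlBdef, eventually_atInfty_inf]
    refine ⟨M₁, fun z hz habs => ?_⟩
    have h1 : ‖gA z - z‖ ≤ 1 := hM₁ z (hΩBA hz) habs
    have h2 := norm_sub_norm_le z (gA z)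
    rw [norm_sub_rev] at h2
    linarith [h1, h2]
  have habsgA : Tendsto (fun z => ‖gA z‖) lB atTop := by
    refine tendsto_atTop_mono' _ habs_lower ?_
    exact tendsto_atTop_add_const_right _ (-1) (abs_tendsto_atTop _) |>.congr fun z => by ring
  have hmaps : Tendsto gA lB lC := by
    rw [hlCdef]
    refine tendsto_inf.mpr ⟨?_, ?_⟩
    · rw [atInftyC, tendsto_comap_iff]
      exact habsgA
    · rw [tendsto_principal]
      filter_upwards [mem_inf_of_right (mem_principal_self (UpperHalf \ B))] with z hz
      exact hmapsTo z hz
  -- `G = h ∘ gA` is a mapping-out function for `B`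
  set G : ℂ → ℂ := fun z => h (gA z) with hGdef
  have hGdiff : DifferentiableOn ℂ G (UpperHalf \ B) := by
    refine DifferentiableOn.comp hh.1 (hgA.1.mono hΩBA) ?_
    intro z hz; exact hmapsTo z hz
  have hGinj : Set.InjOn G (UpperHalf \ B) := by
    refine Set.InjOn.comp hh.2.1 (hgA.2.1.mono hΩBA) ?_
    intro z hz; exact hmapsTo z hz
  have hGimg : G '' (UpperHalf \ B) = UpperHalf := by
    have : G '' (UpperHalf \ B) = h '' (gA '' (UpperHalf \ B)) := by
      rw [← Set.image_comp]; rfl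
    rw [this, himgΩ, hh.2.2.1]
  have hGtend0 : Tendsto (fun z => G z - z) lB (nhds 0) := by
    have h1 : Tendsto (fun z => h (gA z) - gA z) lB (nhds 0) := (hh.2.2.2).comp hmaps
    have h2 := h1.add hABtend
    rw [add_zero] at h2
    exact h2.congr fun z => by show (h (gA z) - gA z) + (gA z - z) = G z - z; ring
  have hGmap : IsMapOut B G := ⟨hGdiff, hGinj, hGimg, hGtend0⟩
  -- limit computation for `z (G z - z)`
  have heqA : Set.EqOn g gA (UpperHalf \ A) :=
    mapout_unique hA.1 hΩA hconnA hg hgA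
  have hgAlim : Tendsto (fun z => z * (gA z - z)) lA (nhds (cA : ℂ)) := by
    refine hglim.congr' ?_
    filter_upwards [mem_inf_of_right (mem_principal_self (UpperHalf \ A))] with z hz
    rw [heqA hz]
  have hzGA : Tendsto (fun z => z * (gA z - z)) lB (nhds (cA : ℂ)) := hgAlim.mono_left hsubl
  have hwh : Tendsto (fun z => gA z * (h (gA z) - gA z)) lB (nhds (cC : ℂ)) := hhlim.comp hmaps
  have hinv : Tendsto (fun z => (gA z)⁻¹) lB (nhds 0) := by
    rw [tendsto_zero_iff_norm_tendsto_zero]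
    simpa [norm_inv, Function.comp_def] using (tendsto_inv_atTop_zero).comp habsgA
  have hne : ∀ᶠ z in lB, gA z ≠ 0 := by
    filter_upwards [habsgA.eventually_ge_atTop 1] with z hz
    intro hzero
    rw [hzero] at hz
    simp at hz
    linarith
  have hratio : Tendsto (fun z => z * (gA z)⁻¹) lB (nhds 1) := by
    have hd : Tendsto (fun z => (z - gA z) * (gA z)⁻¹) lB (nhds 0) := by
      have h1 : Tendsto (fun z => z - gA z) lB (nhds 0) := by
        have := hABtend.neg
        rw [neg_zero] at this
        exact this.congr fun z => by ring
      have := h1.mul hinv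
      rwa [zero_mul] at this
    have h2 : Tendsto (fun z => 1 + (z - gA z) * (gA z)⁻¹) lB (nhds 1) := by
      have := (tendsto_const_nhds (x := (1:ℂ)) (f := lB)).add hd
      rwa [add_zero] at this
    refine h2.congr' ?_
    filter_upwards [hne] with z hz
    field_simp
    ring
  have hfirst : Tendsto (fun z => z * (h (gA z) - gA z)) lB (nhds (cC : ℂ)) := by
    have := hratio.mul hwh
    rw [one_mul] at this
    refine this.congr' ?_
    filter_upwards [hne] with z hz
    field_simp
  have hGz : Tendsto (fun z => z * (G z - z)) lB (nhds ((cC : ℂ) + cA)) := by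
    have := hfirst.add hzGA
    refine this.congr fun z => ?_
    show z * (h (gA z) - gA z) + z * (gA z - z) = z * (G z - z)
    ring
  -- now identify with `gB` via uniqueness
  have heqB : Set.EqOn gB G (UpperHalf \ B) :=
    mapout_unique hB.1 hΩB hconnB hgB hGmap
  have hgBz : Tendsto (fun z => z * (gB z - z)) lB (nhds ((cC : ℂ) + cA)) := by
    refine hGz.congr' ?_
    filter_upwards [mem_inf_of_right (mem_principal_self (UpperHalf \ B))] with z hz
    rw [heqB hz]
  have hneBot : lB.NeBot := neBot_atInfty_inf hB.1
  have hfin : (cB : ℂ) = (cC : ℂ) + cA := tendsto_nhds_unique hgBlim hgBz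
  have : cB = cC + cA := by exact_mod_cast hfin
  linarith
end

section
/- Let S be an irreducible Markov chain on a countable planar vertex set V with transition probabilities p(u,v), started at a vertex of a bounded domain D, and let τ_D be the first exit time from D. Then for every self-avoiding path ω, P(L[(S(0),…,S(τ_D))⁻] = ω) = P(L[(S(0),…,S(τ_D))]⁻ = ω), i.e. the law of the loop erasure of the time reversal equals the law of the time reversal of the loop erasure. -/
open scoped ENNReal

variable {V : Type*}

/-- The weight of a path: the product of the transition probabilities along its steps. -/
noncomputable def pathWeight (p : V → V → ℝ≥0∞) : List V → ℝ≥0∞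
  | [] => 1
  | [_] => 1
  | a :: b :: l => p a b * pathWeight p (b :: l)

/-- Chronological loop erasure of a finite path: loops are erased as they are created. -/
def loopErase [DecidableEq V] : List V → List V :=
  go []
where
  go : List V → List V → List V
  | acc, [] => acc.reverse
  | acc, a :: l => if a ∈ acc then go (acc.drop (acc.idxOf a)) l else go (a :: acc) l

/-- `l` is a possible trajectory of the walk started at `x` and stopped on exiting `D`:
it starts at `x`, all its entries except the last lie in `D`, and the last one is
outside `D`. -/
def IsStoppedPath (D : Set V) (x : V) (l : List V) : Prop :=
  l.head? = some x ∧ (∀ v ∈ l.dropLast, v ∈ D) ∧ ∃ y, l.getLast? = some y ∧ y ∉ D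

/-- `p` is a (sub)stochastic transition kernel. -/
def IsStochastic (p : V → V → ℝ≥0∞) : Prop := ∀ u, ∑' v, p u v = 1

/-- Irreducibility of the walk with kernel `p`. -/
def IsIrreducibleKernel (p : V → V → ℝ≥0∞) : Prop :=
  ∀ u v : V, ∃ l : List V, l.head? = some u ∧ l.getLast? = some v ∧ 0 < pathWeight p l

set_option linter.unusedSectionVars false
set_option linter.unusedVariables false

section PW
variable (p : V → V → ℝ≥0∞)

@[simp] lemma pathWeight_nil : pathWeight p [] = 1 := rfl
@[simp] lemma pathWeight_single (a : V) : pathWeight p [a] = 1 := rfl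
@[simp] lemma pathWeight_cons_cons (a b : V) (l : List V) :
    pathWeight p (a :: b :: l) = p a b * pathWeight p (b :: l) := rfl

lemma pathWeight_append_cons (a : V) (l₁ l₂ : List V) :
    pathWeight p (l₁ ++ a :: l₂) = pathWeight p (l₁ ++ [a]) * pathWeight p (a :: l₂) := by
  induction l₁ with
  | nil => simp
  | cons b l₁ ih =>
    cases l₁ with
    | nil => simp [mul_assoc]
    | cons c l₁ =>
      simp only [List.cons_append, pathWeight_cons_cons] at *
      rw [ih, mul_assoc]

lemma pathWeight_concat (c a : V) (l : List V) (h : l.getLast? = some c) :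
    pathWeight p (l ++ [a]) = pathWeight p l * p c a := by
  induction l with
  | nil => simp at h
  | cons b l ih =>
    cases l with
    | nil => simp at h; simp [h]
    | cons d l =>
      rw [List.getLast?_cons_cons] at h
      simp only [List.cons_append] at *
      rw [pathWeight_cons_cons, ih h, pathWeight_cons_cons, ← mul_assoc]

lemma pathWeight_join (a : V) (l₁ l₂ : List V) (h₁ : l₁.getLast? = some a)
    (h₂ : l₂.head? = some a) :
    pathWeight p (l₁ ++ l₂.tail) = pathWeight p l₁ * pathWeight p l₂ := by
  cases l₂ with
  | nil => simp at h₂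
  | cons b t =>
    have hb : b = a := by simpa using h₂
    subst hb
    obtain ⟨l₁', rfl⟩ : ∃ l', l₁ = l' ++ [b] := by
      cases l₁ with
      | nil => simp at h₁
      | cons x xs => exact ⟨_, (List.dropLast_append_getLast? _ h₁).symm⟩
    cases t with
    | nil => simp
    | cons c t =>
      rw [List.tail_cons, show l₁' ++ [b] ++ c :: t = l₁' ++ b :: (c :: t) by simp,
        pathWeight_append_cons]

lemma pathWeight_append (x y : V) (l₁ l₂ : List V) (h₁ : l₁.getLast? = some x)
    (h₂ : l₂.head? = some y) :
    pathWeight p (l₁ ++ l₂) = pathWeight p l₁ * p x y * pathWeight p l₂ := by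
  cases l₂ with
  | nil => simp at h₂
  | cons b t =>
    have hb : b = y := by simpa using h₂
    subst hb
    rw [show l₁ ++ b :: t = l₁ ++ b :: t from rfl, pathWeight_append_cons,
      pathWeight_concat p x b l₁ h₁]

lemma pathWeight_reverse (p : V → V → ℝ≥0∞) (l : List V) :
    pathWeight (flip p) l = pathWeight p l.reverse := by
  induction l with
  | nil => simp
  | cons a l ih =>
    cases l with
    | nil => simp
    | cons b t =>
      rw [pathWeight_cons_cons, ih,
        show (a :: b :: t).reverse = (b :: t).reverse ++ [a] from List.reverse_cons,
        pathWeight_concat p b a (b :: t).reverse (by rw [List.getLast?_reverse]; rfl)]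
      exact mul_comm _ _

lemma pathWeight_le_one (hp : ∀ u v, p u v ≤ 1) (l : List V) : pathWeight p l ≤ 1 := by
  induction l with
  | nil => simp
  | cons a l ih =>
    cases l with
    | nil => simp
    | cons b t => calc p a b * pathWeight p (b :: t) ≤ 1 * 1 := mul_le_mul' (hp a b) ih
      _ = 1 := by simp

end PW

set_option linter.unusedSectionVars false

section EA
variable [DecidableEq V]

def eAcc [DecidableEq V] : List V → List V → List V
  | acc, [] => acc
  | acc, a :: l => if a ∈ acc then eAcc (acc.drop (acc.idxOf a)) l else eAcc (a :: acc) l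

lemma loopErase_go_eq (acc l : List V) : loopErase.go acc l = (eAcc acc l).reverse := by
  induction l generalizing acc with
  | nil => rfl
  | cons a l ih =>
    rw [loopErase.go, eAcc]
    split <;> exact ih _

lemma loopErase_eq (l : List V) : loopErase l = (eAcc [] l).reverse := loopErase_go_eq [] l

lemma eAcc_append (acc l₁ l₂ : List V) : eAcc acc (l₁ ++ l₂) = eAcc (eAcc acc l₁) l₂ := by
  induction l₁ generalizing acc with
  | nil => rfl
  | cons a l ih =>
    rw [List.cons_append, eAcc, eAcc]
    split <;> exact ih _

lemma indexOf_append_of_mem {a : V} {l₁ : List V} (l₂ : List V) (h : a ∈ l₁) :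
    (l₁ ++ l₂).idxOf a = l₁.idxOf a := by
  induction l₁ with
  | nil => simp at h
  | cons b l ih =>
    rcases eq_or_ne a b with rfl | hne
    · simp [List.idxOf_cons_self]
    · rw [List.mem_cons] at h
      rw [List.cons_append, List.idxOf_cons_ne _ (by exact fun h' => hne h'.symm),
        List.idxOf_cons_ne _ (by exact fun h' => hne h'.symm),
        ih (h.resolve_left hne)]

lemma eAcc_ne_nil {acc : List V} (h : acc ≠ []) (l : List V) : eAcc acc l ≠ [] := by
  induction l generalizing acc with
  | nil => exact h
  | cons a l ih =>
    rw [eAcc]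
    split
    · refine ih fun hd => ?_
      have : acc.idxOf a < acc.length := List.idxOf_lt_length_iff.2 (by assumption)
      have := List.length_drop (i := acc.idxOf a) (l := acc)
      rw [hd] at this
      simp at this
      omega
    · exact ih (by simp)

lemma getLast?_drop {l : List V} {n : ℕ} (h : n < l.length) :
    (l.drop n).getLast? = l.getLast? := by
  induction l generalizing n with
  | nil => simp at h
  | cons a t ih =>
    cases n with
    | zero => rfl
    | succ n =>
      rw [List.drop_succ_cons]
      have ht : n < t.length := by simpa using h
      rw [ih ht]
      cases t with
      | nil => simp at ht
      | cons b t' => rw [List.getLast?_cons_cons]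

lemma eAcc_getLast? {acc : List V} (h : acc ≠ []) (l : List V) :
    (eAcc acc l).getLast? = acc.getLast? := by
  induction l generalizing acc with
  | nil => rfl
  | cons a l ih =>
    rw [eAcc]
    split
    · have hlt : acc.idxOf a < acc.length := List.idxOf_lt_length_iff.2 (by assumption)
      rw [ih (by
        intro hd
        have := List.length_drop (i := acc.idxOf a) (l := acc)
        rw [hd] at this; simp at this; omega)]
      exact getLast?_drop hlt
    · rw [ih (by simp)]
      cases acc with
      | nil => exact absurd rfl h
      | cons b t => rw [List.getLast?_cons_cons]

lemma eAcc_nodup {acc : List V} (h : acc.Nodup) (l : List V) : (eAcc acc l).Nodup := by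
  induction l generalizing acc with
  | nil => exact h
  | cons a l ih =>
    rw [eAcc]
    split
    · exact ih (h.sublist (List.drop_sublist _ _))
    · exact ih (List.nodup_cons.2 ⟨by assumption, h⟩)

lemma eAcc_mem {acc l : List V} {v : V} (h : v ∈ eAcc acc l) : v ∈ acc ∨ v ∈ l := by
  induction l generalizing acc with
  | nil => exact Or.inl h
  | cons a l ih =>
    rw [eAcc] at h
    split at h
    · rcases ih h with h' | h'
      · exact Or.inl (List.drop_subset _ _ h')
      · exact Or.inr (List.mem_cons_of_mem _ h')
    · rcases ih h with h' | h'
      · rcases List.mem_cons.1 h' with rfl | h''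
        · exact Or.inr (List.mem_cons_self)
        · exact Or.inl h''
      · exact Or.inr (List.mem_cons_of_mem _ h')

lemma eAcc_append_right (acc₀ acc₁ l : List V) (h : ∀ a ∈ l, a ∉ acc₀) :
    eAcc (acc₁ ++ acc₀) l = eAcc acc₁ l ++ acc₀ := by
  induction l generalizing acc₁ with
  | nil => rfl
  | cons a l ih =>
    have ha : a ∉ acc₀ := h a (List.mem_cons_self)
    rw [eAcc, eAcc]
    by_cases hm : a ∈ acc₁
    · rw [if_pos (List.mem_append.2 (Or.inl hm)), if_pos hm,
        indexOf_append_of_mem _ hm,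
        List.drop_append_of_le_length (le_of_lt (List.idxOf_lt_length_iff.2 hm)),
        ih _ (fun b hb => h b (List.mem_cons_of_mem _ hb))]
    · rw [if_neg (fun hc => (List.mem_append.1 hc).elim hm ha), if_neg hm,
        ← List.cons_append, ih _ (fun b hb => h b (List.mem_cons_of_mem _ hb))]

lemma eAcc_head? {l : List V} (h : l ≠ []) (acc : List V) :
    (eAcc acc l).head? = l.getLast? := by
  induction l generalizing acc with
  | nil => exact absurd rfl h
  | cons a l ih =>
    rw [eAcc]
    rcases eq_or_ne l [] with rfl | hl
    · split
      · rw [eAcc, List.head?_drop,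
          List.getElem?_eq_getElem (List.idxOf_lt_length_iff.2 (by assumption)),
          List.getElem_idxOf]
        rfl
      · rfl
    · rw [show (a :: l).getLast? = l.getLast? from by
        cases l with | nil => exact absurd rfl hl | cons b t => rw [List.getLast?_cons_cons]]
      split <;> exact ih hl _
end EA

section LE
variable [DecidableEq V]

@[simp] lemma loopErase_nil : loopErase ([] : List V) = [] := rfl

lemma loopErase_head? (l : List V) : (loopErase l).head? = l.head? := by
  cases l with
  | nil => rfl
  | cons a l' =>
    rw [loopErase_eq, List.head?_reverse,
      show eAcc [] (a :: l') = eAcc [a] l' from by rw [eAcc]; simp,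
      eAcc_getLast? (by simp)]
    rfl

lemma loopErase_getLast? (l : List V) : (loopErase l).getLast? = l.getLast? := by
  cases l with
  | nil => rfl
  | cons a l' =>
    rw [loopErase_eq, List.getLast?_reverse, eAcc_head? (by simp)]

lemma loopErase_mem {l : List V} {v : V} (h : v ∈ loopErase l) : v ∈ l := by
  rw [loopErase_eq, List.mem_reverse] at h
  rcases eAcc_mem h with h' | h'
  · simp at h'
  · exact h'

lemma loopErase_nodup (l : List V) : (loopErase l).Nodup := by
  rw [loopErase_eq]
  exact List.nodup_reverse.2 (eAcc_nodup List.nodup_nil l)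

lemma loopErase_cons_of_not_mem {x : V} {l : List V} (h : x ∉ l) :
    loopErase (x :: l) = x :: loopErase l := by
  rw [loopErase_eq, show eAcc [] (x :: l) = eAcc [x] l from by rw [eAcc]; simp,
    show ([x] : List V) = [] ++ [x] from rfl,
    eAcc_append_right _ _ _ (fun a ha => by simp; rintro rfl; exact h ha),
    List.reverse_append, loopErase_eq]
  rfl

lemma eAcc_loop {x : V} {lam : List V} (h1 : lam.head? = some x) (h2 : lam.getLast? = some x) :
    eAcc [] lam = [x] := by
  cases lam with
  | nil => simp at h1
  | cons a t =>
    have ha : a = x := by simpa using h1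
    subst ha
    rcases eq_or_ne t [] with rfl | ht
    · rfl
    · obtain ⟨t', rfl⟩ : ∃ t', t = t' ++ [a] := by
        have : t.getLast? = some a := by
          cases t with
          | nil => exact absurd rfl ht
          | cons b u => rw [List.getLast?_cons_cons] at h2; exact h2
        exact ⟨_, (List.dropLast_append_getLast? _ this).symm⟩
      have step1 : eAcc ([] : List V) (a :: (t' ++ [a])) = eAcc (eAcc [a] t') [a] := by
        rw [show a :: (t' ++ [a]) = (a :: t') ++ [a] from rfl, eAcc_append,
          show eAcc ([] : List V) (a :: t') = eAcc [a] t' from by rw [eAcc]; simp]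
      have hAnodup : (eAcc [a] t').Nodup := eAcc_nodup (by simp) t'
      have hAlast : (eAcc [a] t').getLast? = some a := by rw [eAcc_getLast? (by simp)]; rfl
      obtain ⟨A', hA'⟩ : ∃ A', eAcc [a] t' = A' ++ [a] :=
        ⟨_, (List.dropLast_append_getLast? _ hAlast).symm⟩
      rw [hA'] at hAnodup
      have haA' : a ∉ A' := by
        rw [List.nodup_append] at hAnodup
        intro hmem
        exact hAnodup.2.2 a hmem a (by simp) rfl
      rw [step1, hA', eAcc, if_pos (by simp : a ∈ A' ++ [a]),
        List.idxOf_append_of_notMem haA', List.drop_append_of_le_length (by simp)]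
      simp [eAcc]

lemma loopErase_append_loop {x : V} {lam r : List V} (h1 : lam.head? = some x)
    (h2 : lam.getLast? = some x) (hx : x ∉ r) :
    loopErase (lam ++ r) = x :: loopErase r := by
  rw [loopErase_eq, eAcc_append, eAcc_loop h1 h2,
    show ([x] : List V) = [] ++ [x] from rfl,
    eAcc_append_right _ _ _ (fun a ha => by simp; rintro rfl; exact hx ha),
    List.reverse_append, loopErase_eq]
  rfl

lemma exists_first_split {x : V} {l : List V} (h : x ∈ l) :
    ∃ s t, l = s ++ x :: t ∧ x ∉ s := by
  induction l with
  | nil => simp at h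
  | cons a l ih =>
    rcases eq_or_ne a x with rfl | hne
    · exact ⟨[], l, rfl, by simp⟩
    · obtain ⟨s, t, rfl, hs⟩ := ih ((List.mem_cons.1 h).resolve_left (fun h' => hne h'.symm))
      exact ⟨a :: s, t, rfl, by simp only [List.mem_cons]; rintro (rfl | hc); exacts [hne rfl, hs hc]⟩

lemma exists_last_split {x : V} {l : List V} (h : x ∈ l) :
    ∃ g r, l = (g ++ [x]) ++ r ∧ x ∉ r := by
  obtain ⟨s, t, hrev, hs⟩ := exists_first_split (x := x) (l := l.reverse) (by simpa using h)
  refine ⟨t.reverse, s.reverse, ?_, by simpa using hs⟩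
  have := congrArg List.reverse hrev
  simpa [List.reverse_append] using this

lemma exists_loop_split {x : V} {l σ' : List V} (h : loopErase l = x :: σ')
    (hlast : l.getLast? ≠ some x) :
    ∃ lam r, l = lam ++ r ∧ lam.head? = some x ∧ lam.getLast? = some x ∧ x ∉ r ∧ r ≠ [] ∧
      loopErase r = σ' := by
  have hhead : l.head? = some x := by rw [← loopErase_head?, h]; rfl
  have hxl : x ∈ l := List.mem_of_mem_head? (by rw [hhead]; rfl)
  obtain ⟨g, r, rfl, hxr⟩ := exists_last_split hxl
  have hlam_head : (g ++ [x]).head? = some x := by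
    rcases g with _ | ⟨b, g'⟩
    · rfl
    · simpa using hhead
  have hlam_last : (g ++ [x]).getLast? = some x := by simp
  have hr : r ≠ [] := by
    rintro rfl
    exact hlast (by simp)
  have := loopErase_append_loop hlam_head hlam_last hxr
  rw [h] at this
  exact ⟨g ++ [x], r, rfl, hlam_head, hlam_last, hxr, hr, (List.cons.injEq .. ▸ this).2.symm⟩

end LE

section Tsum
variable {α β : Type*}

lemma tsum_subtype_congr {P Q : α → Prop} (h : ∀ a, P a ↔ Q a) (f : α → ℝ≥0∞) :
    ∑' x : {a // P a}, f x.1 = ∑' x : {a // Q a}, f x.1 :=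
  Equiv.tsum_eq (Equiv.subtypeEquivRight h) (fun x : {a // Q a} => f x.1)

lemma tsum_subtype_split (P Q : α → Prop) (f : α → ℝ≥0∞) :
    ∑' x : {a // P a}, f x.1
      = (∑' x : {a // P a ∧ Q a}, f x.1) + ∑' x : {a // P a ∧ ¬ Q a}, f x.1 := by
  rw [← Summable.tsum_add_tsum_compl (s := {x : {a // P a} | Q x.1}) ENNReal.summable ENNReal.summable]
  congr 1
  · exact Equiv.tsum_eq (Equiv.subtypeSubtypeEquivSubtypeInter P Q)
      (fun x : {a // P a ∧ Q a} => f x.1) |>.symm ▸ rfl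
  · exact Equiv.tsum_eq (Equiv.subtypeSubtypeEquivSubtypeInter P (fun a => ¬ Q a))
      (fun x : {a // P a ∧ ¬ Q a} => f x.1) |>.symm ▸ rfl

lemma tsum_prod_mul (f : α → ℝ≥0∞) (g : β → ℝ≥0∞) :
    ∑' x : α × β, f x.1 * g x.2 = (∑' a, f a) * ∑' b, g b := by
  rw [ENNReal.tsum_prod (f := fun a b => f a * g b)]
  simp_rw [ENNReal.tsum_mul_left]
  rw [ENNReal.tsum_mul_right]

lemma tsum_subtype_eq_single {P : α → Prop} (c : α) (h : ∀ a, P a ↔ a = c) (f : α → ℝ≥0∞)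
    (hc : P c) :
    ∑' x : {a // P a}, f x.1 = f c := by
  rw [tsum_eq_single (⟨c, hc⟩ : {a // P a})]
  intro b' hb'
  exact absurd (Subtype.ext ((h _).1 b'.2)) hb'

lemma tsum_subtype_mono {P Q : α → Prop} (h : ∀ a, P a → Q a) (f : α → ℝ≥0∞) :
    ∑' x : {a // P a}, f x.1 ≤ ∑' x : {a // Q a}, f x.1 :=
  Summable.tsum_le_tsum_of_inj (fun x => ⟨x.1, h _ x.2⟩)
    (by intro a b hab; exact Subtype.ext (by simpa using congrArg Subtype.val hab))
    (fun _ _ => zero_le) (fun _ => le_rfl) ENNReal.summable ENNReal.summable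

lemma tsum_subtype_zero {P : α → Prop} (h : ∀ a, ¬ P a) (f : α → ℝ≥0∞) :
    ∑' x : {a // P a}, f x.1 = 0 :=
  have : IsEmpty {a // P a} := ⟨fun x => h x.1 x.2⟩
  tsum_empty

end Tsum

section ListHelp

lemma mem_of_getLast? {l : List V} {c : V} (h : l.getLast? = some c) : c ∈ l := by
  have := List.dropLast_append_getLast? c h
  rw [← this]
  simp

lemma head?_append_left {l₁ : List V} (h : l₁ ≠ []) (l₂ : List V) :
    (l₁ ++ l₂).head? = l₁.head? := by
  cases l₁ with
  | nil => exact absurd rfl h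
  | cons a t => rfl

lemma getLast?_append_right (l₁ : List V) {l₂ : List V} (h : l₂ ≠ []) :
    (l₁ ++ l₂).getLast? = l₂.getLast? := by
  rw [← List.head?_reverse, List.reverse_append, head?_append_left (by simpa using h),
    List.head?_reverse]

lemma mem_dropLast_or_getLast {l : List V} {v : V} (h : v ∈ l) :
    v ∈ l.dropLast ∨ l.getLast? = some v := by
  induction l with
  | nil => simp at h
  | cons a t ih =>
    cases t with
    | nil => right; simp only [List.mem_singleton] at h; simp [h]
    | cons b t' =>
      rcases List.mem_cons.1 h with rfl | h'
      · left; simp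
      · rcases ih h' with h'' | h''
        · left; rw [List.dropLast_cons₂]; exact List.mem_cons_of_mem _ h''
        · right; rwa [List.getLast?_cons_cons]

lemma getLast?_tail_of_ne_nil {l : List V} (h : l.tail ≠ []) : l.tail.getLast? = l.getLast? := by
  cases l with
  | nil => rfl
  | cons a t =>
    cases t with
    | nil => simp at h
    | cons b t' => rw [List.tail_cons, List.getLast?_cons_cons]

lemma dropLast_tail_subset (l : List V) : ∀ v ∈ l.tail.dropLast, v ∈ l.dropLast := by
  cases l with
  | nil => simp
  | cons a t =>
    cases t with
    | nil => simp
    | cons b t' =>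
      intro v hv
      rw [List.tail_cons] at hv
      rw [List.dropLast_cons₂]
      exact List.mem_cons_of_mem _ hv

end ListHelp

section Green
variable (p : V → V → ℝ≥0∞)

def PathsIn (B : Set V) (x c : V) (l : List V) : Prop :=
  l.head? = some x ∧ l.getLast? = some c ∧ ∀ v ∈ l.dropLast, v ∈ B

noncomputable def PT (B : Set V) (x c : V) : ℝ≥0∞ :=
  ∑' l : {l : List V // PathsIn B x c l}, pathWeight p l.1

noncomputable def Gr (B : Set V) (x : V) : ℝ≥0∞ := PT p B x x

def LEPath (B : Set V) (y c : V) (l : List V) : Prop :=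
  PathsIn B y c l ∧ ∀ v ∈ l.tail, v ≠ y

noncomputable def LEw (B : Set V) (y c : V) : ℝ≥0∞ :=
  ∑' l : {l : List V // LEPath B y c l}, pathWeight p l.1

noncomputable def Tw (B : Set V) (x : V) : ℝ≥0∞ :=
  ∑' l : {l : List V // l.head? = some x ∧ ∀ v ∈ l.dropLast, v ∈ B}, pathWeight p l.1

variable {p}

lemma PathsIn.ne_nil {B : Set V} {x c : V} {l : List V} (h : PathsIn B x c l) : l ≠ [] := by
  rintro rfl; simp [PathsIn] at h

lemma eq_cons_of_head? {l : List V} {a : V} (h : l.head? = some a) : l = a :: l.tail := by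
  cases l with
  | nil => simp at h
  | cons b t => simp only [List.head?_cons, Option.some.injEq] at h; rw [h]; rfl

lemma singleton_of_head?_tail {l : List V} {a : V} (h : l.head? = some a) (h2 : l.tail = []) :
    l = [a] := by
  rw [eq_cons_of_head? h, h2]

lemma Gr_of_not_mem {B : Set V} {x : V} (hx : x ∉ B) : Gr p B x = 1 := by
  rw [Gr, PT, tsum_subtype_eq_single [x] ?_ _ ⟨rfl, rfl, by simp⟩]
  · rfl
  · intro l
    constructor
    · rintro ⟨h1, h2, h3⟩
      rw [eq_cons_of_head? h1]
      cases hl : l.tail with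
      | nil => rfl
      | cons b t =>
        exfalso
        apply hx
        apply h3
        rw [eq_cons_of_head? h1, hl, List.dropLast_cons₂]
        simp
    · rintro rfl
      exact ⟨rfl, rfl, by simp⟩

lemma PT_mono {B B' : Set V} (h : B ⊆ B') (x c : V) : PT p B x c ≤ PT p B' x c :=
  tsum_subtype_mono (fun l hl => ⟨hl.1, hl.2.1, fun v hv => h (hl.2.2 v hv)⟩) _

lemma PT_le_Tw (B : Set V) (x c : V) : PT p B x c ≤ Tw p B x :=
  tsum_subtype_mono (fun l hl => ⟨hl.1, hl.2.2⟩) _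

lemma LEw_le_Tw (B : Set V) (y c : V) : LEw p B y c ≤ Tw p B y :=
  tsum_subtype_mono (fun l hl => ⟨hl.1.1, hl.1.2.2⟩) _

lemma Gr_le_Tw (B : Set V) (x : V) : Gr p B x ≤ Tw p B x := PT_le_Tw B x x

lemma Tw_mono {B B' : Set V} (h : B ⊆ B') (x : V) : Tw p B x ≤ Tw p B' x :=
  tsum_subtype_mono (fun l hl => ⟨hl.1, fun v hv => h (hl.2 v hv)⟩) _

/-- Injectivity of joining at a vertex occurring only at the junction. -/
lemma append_tail_inj {y : V} {u₁ u₂ t₁ t₂ : List V}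
    (hu₁l : u₁.getLast? = some y) (hu₂l : u₂.getLast? = some y)
    (ht₁h : t₁.head? = some y) (ht₂h : t₂.head? = some y)
    (hside : (∀ v ∈ u₁.dropLast, v ≠ y) ∧ (∀ v ∈ u₂.dropLast, v ≠ y)
      ∨ (∀ v ∈ t₁.tail, v ≠ y) ∧ (∀ v ∈ t₂.tail, v ≠ y))
    (h : u₁ ++ t₁.tail = u₂ ++ t₂.tail) : u₁ = u₂ ∧ t₁ = t₂ := by
  have key : ∀ u₁' u₂' t₁' t₂' : List V, u₁'.getLast? = some y → u₂'.getLast? = some y →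
      t₁'.head? = some y → t₂'.head? = some y →
      ((∀ v ∈ u₁'.dropLast, v ≠ y) ∧ (∀ v ∈ u₂'.dropLast, v ≠ y)
        ∨ (∀ v ∈ t₁'.tail, v ≠ y) ∧ (∀ v ∈ t₂'.tail, v ≠ y)) →
      (∃ a', u₂' = u₁' ++ a' ∧ t₁'.tail = a' ++ t₂'.tail) → u₁' = u₂' ∧ t₁' = t₂' := by
    rintro u₁' u₂' t₁' t₂' hu₁l hu₂l ht₁h ht₂h hside ⟨a', ha₁, ha₂⟩
    rcases eq_or_ne a' [] with rfl | hne
    · simp only [List.append_nil] at ha₁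
      simp only [List.nil_append] at ha₂
      refine ⟨ha₁.symm, ?_⟩
      rw [eq_cons_of_head? ht₁h, eq_cons_of_head? ht₂h, ha₂]
    · exfalso
      have hy₁ : y ∈ u₁' := mem_of_getLast? hu₁l
      rcases hside with ⟨hd₁, hd₂⟩ | ⟨ht₁, ht₂⟩
      · -- y not in dropLast u₂', but y ∈ u₁' ⊆ dropLast u₂'
        apply hd₂ y ?_ rfl
        rw [ha₁, List.dropLast_append_of_ne_nil hne]
        exact List.mem_append.2 (Or.inl hy₁)
      · -- y not in t₁'.tail, but last of u₂' = y lands in a' ⊆ t₁'.tail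
        have : (u₂').getLast? = a'.getLast? := getLast?_append_right _ hne |>.symm ▸ by
          rw [ha₁, getLast?_append_right _ hne]
        have hya : y ∈ a' := mem_of_getLast? (by rw [← this, hu₂l])
        exact ht₁ y (ha₂ ▸ List.mem_append.2 (Or.inl hya)) rfl
  rcases List.append_eq_append_iff.1 h with ⟨a', ha₁, ha₂⟩ | ⟨c', hc₁, hc₂⟩
  · exact key u₁ u₂ t₁ t₂ hu₁l hu₂l ht₁h ht₂h hside ⟨a', ha₁, ha₂⟩
  · obtain ⟨e1, e2⟩ := key u₂ u₁ t₂ t₁ hu₂l hu₁l ht₂h ht₁h (by tauto) ⟨c', hc₁, hc₂⟩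
    exact ⟨e1.symm, e2.symm⟩

end Green

section Split
variable {p : V → V → ℝ≥0∞}

lemma dropLast_subset_of_append {g r l : List V} (hl : l = g ++ r) (hr : r ≠ [])
    {B : Set V} (h : ∀ v ∈ l.dropLast, v ∈ B) : ∀ v ∈ g, v ∈ B := by
  intro v hv
  apply h
  rw [hl, List.dropLast_append_of_ne_nil hr]
  exact List.mem_append.2 (Or.inl hv)

/-- Splitting a path at the first visit to `y`. -/
lemma tsum_split_first (p : V → V → ℝ≥0∞) (B : Set V) (x c y : V) (hy : y ∈ B) :
    ∑' l : {l : List V // PathsIn B x c l ∧ y ∈ l}, pathWeight p l.1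
      = PT p (B \ {y}) x y * PT p B y c := by
  classical
  set A := {u : List V // PathsIn (B \ {y}) x y u} × {t : List V // PathsIn B y c t} with hA
  have hjoin : ∀ w : A, PathsIn B x c (w.1.1 ++ w.2.1.tail) ∧ y ∈ w.1.1 ++ w.2.1.tail := by
    rintro ⟨⟨u, hu1, hu2, hu3⟩, ⟨t, ht1, ht2, ht3⟩⟩
    show PathsIn B x c (u ++ t.tail) ∧ y ∈ u ++ t.tail
    have hune : u ≠ [] := by rintro rfl; simp at hu1
    have hyu : y ∈ u := mem_of_getLast? hu2
    have huB : ∀ v ∈ u, v ∈ B := by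
      intro v hv
      rcases mem_dropLast_or_getLast hv with h' | h'
      · exact (hu3 v h').1
      · rw [hu2] at h'
        obtain rfl : y = v := by simpa using h'
        exact hy
    refine ⟨⟨?_, ?_, ?_⟩, List.mem_append.2 (Or.inl hyu)⟩
    · rw [head?_append_left hune, hu1]
    · rcases eq_or_ne t.tail [] with htt | htt
      · have : t = [y] := singleton_of_head?_tail ht1 htt
        subst this
        simp only [List.getLast?_singleton, Option.some.injEq] at ht2
        rw [htt, List.append_nil, hu2, ht2]
      · rw [getLast?_append_right _ htt, getLast?_tail_of_ne_nil htt, ht2]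
    · rcases eq_or_ne t.tail [] with htt | htt
      · rw [htt, List.append_nil]
        intro v hv
        exact (hu3 v hv).1
      · rw [List.dropLast_append_of_ne_nil htt]
        intro v hv
        rcases List.mem_append.1 hv with h' | h'
        · exact huB v h'
        · exact ht3 v (dropLast_tail_subset t v h')
  let j : A → {l : List V // PathsIn B x c l ∧ y ∈ l} :=
    fun w => ⟨w.1.1 ++ w.2.1.tail, hjoin w⟩
  have hinj : Function.Injective j := by
    rintro ⟨⟨u₁, hu₁⟩, ⟨t₁, ht₁⟩⟩ ⟨⟨u₂, hu₂⟩, ⟨t₂, ht₂⟩⟩ h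
    have h' : u₁ ++ t₁.tail = u₂ ++ t₂.tail := congrArg Subtype.val h
    obtain ⟨e1, e2⟩ := append_tail_inj hu₁.2.1 hu₂.2.1 ht₁.1 ht₂.1
      (Or.inl ⟨fun v hv => (hu₁.2.2 v hv).2, fun v hv => (hu₂.2.2 v hv).2⟩) h'
    exact Prod.ext (Subtype.ext e1) (Subtype.ext e2)
  have hsurj : Function.Surjective j := by
    rintro ⟨l, ⟨hl1, hl2, hl3⟩, hyl⟩
    obtain ⟨s, t', hsplit, hys⟩ := exists_first_split hyl
    have hsB : ∀ v ∈ s, v ∈ B := by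
      intro v hv
      apply hl3
      rw [hsplit, show s ++ y :: t' = s ++ (y :: t') from rfl,
        List.dropLast_append_of_ne_nil (by simp)]
      exact List.mem_append.2 (Or.inl hv)
    refine ⟨⟨⟨s ++ [y], ?_, by simp, ?_⟩, ⟨y :: t', rfl, ?_, ?_⟩⟩, ?_⟩
    · rw [← hl1, hsplit]
      cases s with
      | nil => rfl
      | cons a s' => rfl
    · rw [List.dropLast_concat]
      intro v hv
      exact ⟨hsB v hv, hys ∘ (· ▸ hv)⟩
    · rcases eq_or_ne t' [] with rfl | ht'
      · rw [← hl2, hsplit]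
        simp
      · have hgl : l.getLast? = t'.getLast? := by
          rw [hsplit, show s ++ y :: t' = s ++ (y :: t') from rfl,
            getLast?_append_right _ (by simp)]
          cases t' with
          | nil => exact absurd rfl ht'
          | cons b t'' => rw [List.getLast?_cons_cons]
        rw [show (y :: t').getLast? = t'.getLast? from by
          cases t' with
          | nil => exact absurd rfl ht'
          | cons b t'' => rw [List.getLast?_cons_cons], ← hgl, hl2]
    · rcases eq_or_ne t' [] with rfl | ht'
      · simp
      · rw [show (y :: t').dropLast = y :: t'.dropLast from by
          cases t' with
          | nil => exact absurd rfl ht'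
          | cons b t'' => rfl]
        intro v hv
        rcases List.mem_cons.1 hv with rfl | hv'
        · exact hy
        · apply hl3
          rw [hsplit, show s ++ y :: t' = s ++ (y :: t') from rfl,
            List.dropLast_append_of_ne_nil (by simp),
            show (y :: t').dropLast = y :: t'.dropLast from by
              cases t' with
              | nil => exact absurd rfl ht'
              | cons b t'' => rfl]
          exact List.mem_append.2 (Or.inr (List.mem_cons_of_mem _ hv'))
    · apply Subtype.ext
      show (s ++ [y]) ++ (y :: t').tail = l
      rw [List.tail_cons, hsplit, List.append_assoc]
      rfl
  rw [← Equiv.tsum_eq (Equiv.ofBijective j ⟨hinj, hsurj⟩) (fun l => pathWeight p l.1)]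
  have hwt : ∀ w : A, pathWeight p ((j w).1) = pathWeight p w.1.1 * pathWeight p w.2.1 := by
    rintro ⟨⟨u, hu⟩, ⟨t, ht⟩⟩
    exact pathWeight_join p y u t hu.2.1 ht.1
  calc ∑' w : A, pathWeight p ((Equiv.ofBijective j ⟨hinj, hsurj⟩ w).1)
      = ∑' w : A, pathWeight p w.1.1 * pathWeight p w.2.1 :=
        tsum_congr fun w => by exact hwt w
    _ = _ := by
        rw [tsum_prod_mul (fun u : {u // PathsIn (B \ {y}) x y u} => pathWeight p u.1)
          (fun t : {t // PathsIn B y c t} => pathWeight p t.1)]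
        rfl

/-- Splitting a path at the last visit to its starting point `y`. -/
lemma PT_eq_Gr_mul_LE (p : V → V → ℝ≥0∞) (B : Set V) (y c : V) (hy : y ∈ B) :
    PT p B y c = Gr p B y * LEw p B y c := by
  classical
  set A := {m : List V // PathsIn B y y m} × {s : List V // LEPath B y c s} with hA
  have hjoin : ∀ w : A, PathsIn B y c (w.1.1 ++ w.2.1.tail) := by
    rintro ⟨⟨m, hm1, hm2, hm3⟩, ⟨s, ⟨hs1, hs2, hs3⟩, hs4⟩⟩
    show PathsIn B y c (m ++ s.tail)
    have hmne : m ≠ [] := by rintro rfl; simp at hm1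
    have hmB : ∀ v ∈ m, v ∈ B := by
      intro v hv
      rcases mem_dropLast_or_getLast hv with h' | h'
      · exact hm3 v h'
      · rw [hm2] at h'
        obtain rfl : y = v := by simpa using h'
        exact hy
    refine ⟨?_, ?_, ?_⟩
    · rw [head?_append_left hmne, hm1]
    · rcases eq_or_ne s.tail [] with hst | hst
      · have : s = [y] := singleton_of_head?_tail hs1 hst
        subst this
        simp only [List.getLast?_singleton, Option.some.injEq] at hs2
        rw [hst, List.append_nil, hm2, hs2]
      · rw [getLast?_append_right _ hst, getLast?_tail_of_ne_nil hst, hs2]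
    · rcases eq_or_ne s.tail [] with hst | hst
      · rw [hst, List.append_nil]
        intro v hv
        exact hmB v (List.dropLast_subset _ hv)
      · rw [List.dropLast_append_of_ne_nil hst]
        intro v hv
        rcases List.mem_append.1 hv with h' | h'
        · exact hmB v h'
        · exact hs3 v (dropLast_tail_subset s v h')
  let j : A → {l : List V // PathsIn B y c l} := fun w => ⟨w.1.1 ++ w.2.1.tail, hjoin w⟩
  have hinj : Function.Injective j := by
    rintro ⟨⟨m₁, hm₁⟩, ⟨s₁, hs₁⟩⟩ ⟨⟨m₂, hm₂⟩, ⟨s₂, hs₂⟩⟩ h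
    have h' : m₁ ++ s₁.tail = m₂ ++ s₂.tail := congrArg Subtype.val h
    obtain ⟨e1, e2⟩ := append_tail_inj hm₁.2.1 hm₂.2.1 hs₁.1.1 hs₂.1.1
      (Or.inr ⟨hs₁.2, hs₂.2⟩) h'
    exact Prod.ext (Subtype.ext e1) (Subtype.ext e2)
  have hsurj : Function.Surjective j := by
    rintro ⟨l, hl1, hl2, hl3⟩
    have hyl : y ∈ l := List.mem_of_mem_head? (by rw [hl1]; rfl)
    obtain ⟨g, r, hsplit, hyr⟩ := exists_last_split hyl
    have hgB : ∀ v ∈ g, v ∈ B := by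
      intro v hv
      rcases eq_or_ne r [] with rfl | hr
      · apply hl3
        rw [hsplit, List.append_nil, List.dropLast_concat]
        exact hv
      · apply hl3
        rw [hsplit, List.dropLast_append_of_ne_nil hr]
        exact List.mem_append.2 (Or.inl (List.mem_append.2 (Or.inl hv)))
    refine ⟨⟨⟨g ++ [y], ?_, by simp, ?_⟩, ⟨y :: r, ⟨rfl, ?_, ?_⟩, ?_⟩⟩, ?_⟩
    · rw [← hl1, hsplit]
      cases g with
      | nil => rfl
      | cons a g' => rfl
    · rw [List.dropLast_concat]
      exact hgB
    · rcases eq_or_ne r [] with rfl | hr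
      · rw [← hl2, hsplit]
        simp
      · rw [show (y :: r).getLast? = r.getLast? from by
          cases r with
          | nil => exact absurd rfl hr
          | cons b r' => rw [List.getLast?_cons_cons], ← hl2, hsplit,
          getLast?_append_right _ hr]
    · rcases eq_or_ne r [] with rfl | hr
      · simp
      · rw [show (y :: r).dropLast = y :: r.dropLast from by
          cases r with
          | nil => exact absurd rfl hr
          | cons b r' => rfl]
        intro v hv
        rcases List.mem_cons.1 hv with rfl | hv'
        · exact hy
        · apply hl3
          rw [hsplit, List.dropLast_append_of_ne_nil hr]
          exact List.mem_append.2 (Or.inr hv')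
    · intro v hv h'
      exact hyr (h' ▸ hv)
    · apply Subtype.ext
      show (g ++ [y]) ++ (y :: r).tail = l
      rw [List.tail_cons, hsplit]
  rw [PT, ← Equiv.tsum_eq (Equiv.ofBijective j ⟨hinj, hsurj⟩) (fun l => pathWeight p l.1)]
  have hwt : ∀ w : A, pathWeight p ((j w).1) = pathWeight p w.1.1 * pathWeight p w.2.1 := by
    rintro ⟨⟨m, hm⟩, ⟨s, hs⟩⟩
    exact pathWeight_join p y m s hm.2.1 hs.1.1
  calc ∑' w : A, pathWeight p ((Equiv.ofBijective j ⟨hinj, hsurj⟩ w).1)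
      = ∑' w : A, pathWeight p w.1.1 * pathWeight p w.2.1 :=
        tsum_congr fun w => by exact hwt w
    _ = _ := by
        rw [tsum_prod_mul (fun m : {m // PathsIn B y y m} => pathWeight p m.1)
          (fun s : {s // LEPath B y c s} => pathWeight p s.1)]
        rfl

end Split

section Swap
variable {p : V → V → ℝ≥0∞}

lemma PathsIn_diff_iff {B : Set V} {y x c : V} (hc : c ≠ y) (l : List V) :
    PathsIn B x c l ∧ y ∉ l ↔ PathsIn (B \ {y}) x c l := by
  constructor
  · rintro ⟨⟨h1, h2, h3⟩, h4⟩
    exact ⟨h1, h2, fun v hv => ⟨h3 v hv, fun hvy => h4 (hvy ▸ List.dropLast_subset _ hv)⟩⟩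
  · rintro ⟨h1, h2, h3⟩
    refine ⟨⟨h1, h2, fun v hv => (h3 v hv).1⟩, fun hyl => ?_⟩
    rcases mem_dropLast_or_getLast hyl with h' | h'
    · exact (h3 y h').2 rfl
    · rw [h2] at h'
      exact hc (Option.some_injective _ h')

lemma Gr_dec (p : V → V → ℝ≥0∞) {B : Set V} {x y : V} (hy : y ∈ B) (hxy : x ≠ y) :
    Gr p B x = PT p (B \ {y}) x y * (Gr p B y * LEw p B y x) + Gr p (B \ {y}) x := by
  rw [Gr, PT, tsum_subtype_split (PathsIn B x x) (fun l => y ∈ l)]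
  congr 1
  · rw [tsum_split_first p B x x y hy, PT_eq_Gr_mul_LE p B y x hy]
  · rw [Gr, PT]
    exact tsum_subtype_congr (P := fun l => PathsIn B x x l ∧ y ∉ l)
      (Q := PathsIn (B \ {y}) x x) (fun l => PathsIn_diff_iff hxy l) (pathWeight p)

lemma PT_first (p : V → V → ℝ≥0∞) {B : Set V} (x : V) {y : V} (hy : y ∈ B) :
    PT p B x y = PT p (B \ {y}) x y * Gr p B y := by
  rw [PT, tsum_subtype_congr (Q := fun l => PathsIn B x y l ∧ y ∈ l)
    (fun l => ⟨fun h => ⟨h, mem_of_getLast? h.2.1⟩, fun h => h.1⟩) _,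
    tsum_split_first p B x y y hy, Gr]

lemma Gr_swap (p : V → V → ℝ≥0∞) {B : Set V} {x y : V} (hxy : x ≠ y)
    (hb : Gr p B y ≠ ⊤) (hE : PT p (B \ {y}) x y ≠ ⊤) (hE₂ : LEw p B y x ≠ ⊤) :
    Gr p B x * Gr p (B \ {x}) y = Gr p B y * Gr p (B \ {y}) x := by
  by_cases hx : x ∈ B
  · by_cases hy : y ∈ B
    · have h1 := Gr_dec p hy hxy
      have h2 := Gr_dec p hx hxy.symm
      have hX1a : PT p B x y = PT p (B \ {y}) x y * Gr p B y := PT_first p x hy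
      have hX1b : PT p B x y = Gr p B x * LEw p B x y := PT_eq_Gr_mul_LE p B x y hx
      have hX2a : PT p B y x = PT p (B \ {x}) y x * Gr p B x := PT_first p y hx
      have hX2b : PT p B y x = Gr p B y * LEw p B y x := PT_eq_Gr_mul_LE p B y x hy
      set a := Gr p B x
      set b := Gr p B y
      set a' := Gr p (B \ {y}) x
      set b' := Gr p (B \ {x}) y
      set E := PT p (B \ {y}) x y
      set E₂ := LEw p B y x
      set F := PT p (B \ {x}) y x
      set F₂ := LEw p B x y
      have key1 : a * b = (E * b) * (E₂ * b) + a' * b := by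
        calc a * b = (E * (b * E₂) + a') * b := by rw [← h1]
          _ = (E * b) * (E₂ * b) + a' * b := by ring
      have key2 : a * b = (E * b) * (E₂ * b) + a * b' := by
        calc a * b = a * (F * (a * F₂) + b') := by rw [← h2]
          _ = (F * a) * (a * F₂) + a * b' := by ring
          _ = (b * E₂) * (E * b) + a * b' := by rw [← hX2a, hX2b, ← hX1b, hX1a]
          _ = (E * b) * (E₂ * b) + a * b' := by ring
      have hK : (E * b) * (E₂ * b) ≠ ⊤ :=
        ENNReal.mul_ne_top (ENNReal.mul_ne_top hE hb) (ENNReal.mul_ne_top hE₂ hb)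
      have hfin : a' * b = a * b' := (ENNReal.add_right_inj hK).1 (key1.symm.trans key2)
      calc a * b' = a' * b := hfin.symm
        _ = b * a' := mul_comm _ _
    · rw [Gr_of_not_mem hy, Gr_of_not_mem (fun h => hy (Set.diff_subset h)), one_mul,
        Set.diff_singleton_eq_self hy]
      simp
  · rw [Gr_of_not_mem hx, Gr_of_not_mem (fun h => hx (Set.diff_subset h)), Set.diff_singleton_eq_self hx,
      one_mul, mul_comm]
    simp

end Swap

section ProdG
variable {p : V → V → ℝ≥0∞} {D : Set V}

noncomputable def prodG (p : V → V → ℝ≥0∞) : List V → Set V → ℝ≥0∞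
  | [], _ => 1
  | x :: l, B => Gr p B x * prodG p l (B \ {x})

@[simp] lemma prodG_nil (B : Set V) : prodG p [] B = 1 := rfl
@[simp] lemma prodG_cons (x : V) (l : List V) (B : Set V) :
    prodG p (x :: l) B = Gr p B x * prodG p l (B \ {x}) := rfl

lemma Gr_ne_top (hT : ∀ z, Tw p D z ≠ ⊤) {B : Set V} (hB : B ⊆ D) (x : V) :
    Gr p B x ≠ ⊤ :=
  ne_top_of_le_ne_top (hT x) (le_trans (Gr_le_Tw B x) (Tw_mono hB x))

lemma PT_ne_top (hT : ∀ z, Tw p D z ≠ ⊤) {B : Set V} (hB : B ⊆ D) (x c : V) :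
    PT p B x c ≠ ⊤ :=
  ne_top_of_le_ne_top (hT x) (le_trans (PT_le_Tw B x c) (Tw_mono hB x))

lemma LEw_ne_top (hT : ∀ z, Tw p D z ≠ ⊤) {B : Set V} (hB : B ⊆ D) (y c : V) :
    LEw p B y c ≠ ⊤ :=
  ne_top_of_le_ne_top (hT y) (le_trans (LEw_le_Tw B y c) (Tw_mono hB y))

lemma prodG_move (hT : ∀ z, Tw p D z ≠ ⊤) (l : List V) :
    ∀ (B : Set V), B ⊆ D → ∀ x : V, x ∉ l →
      Gr p B x * prodG p l (B \ {x}) = prodG p l B * Gr p (B \ {v | v ∈ l}) x := by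
  induction l with
  | nil =>
    intro B hB x hx
    rw [prodG_nil, prodG_nil, show ({v | v ∈ ([] : List V)} : Set V) = ∅ by simp,
      Set.diff_empty, mul_one, one_mul]
  | cons y l ih =>
    intro B hB x hx
    have hxy : x ≠ y := fun h => hx (h ▸ List.mem_cons_self)
    have hxl : x ∉ l := fun h => hx (List.mem_cons_of_mem _ h)
    calc Gr p B x * prodG p (y :: l) (B \ {x})
        = (Gr p B x * Gr p (B \ {x}) y) * prodG p l ((B \ {x}) \ {y}) := by
          rw [prodG_cons]; ring
      _ = (Gr p B y * Gr p (B \ {y}) x) * prodG p l ((B \ {y}) \ {x}) := by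
          rw [Gr_swap p hxy (Gr_ne_top hT hB y) (PT_ne_top hT (fun v hv => hB (Set.diff_subset hv)) x y)
            (LEw_ne_top hT hB y x), Set.diff_diff_comm]
      _ = Gr p B y * (Gr p (B \ {y}) x * prodG p l ((B \ {y}) \ {x})) := by ring
      _ = Gr p B y * (prodG p l (B \ {y}) * Gr p ((B \ {y}) \ {v | v ∈ l}) x) := by
          rw [ih (B \ {y}) (fun v hv => hB (Set.diff_subset hv)) x hxl]
      _ = prodG p (y :: l) B * Gr p (B \ {v | v ∈ y :: l}) x := by
          rw [prodG_cons, show (B \ {y}) \ {v | v ∈ l} = B \ {v | v ∈ y :: l} by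
            ext v; simp [and_assoc, and_comm, not_or]; tauto]
          ring

lemma prodG_set_congr {l : List V} {B B' : Set V} (h : B = B') : prodG p l B = prodG p l B' := by
  rw [h]

lemma prodG_append (l₁ l₂ : List V) : ∀ B : Set V,
    prodG p (l₁ ++ l₂) B = prodG p l₁ B * prodG p l₂ (B \ {v | v ∈ l₁}) := by
  induction l₁ with
  | nil =>
    intro B
    rw [List.nil_append, prodG_nil, one_mul,
      prodG_set_congr (show B \ {v | v ∈ ([] : List V)} = B by simp)]
  | cons x l₁ ih =>
    intro B
    rw [List.cons_append, prodG_cons, ih, prodG_cons, mul_assoc,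
      prodG_set_congr (show (B \ {x}) \ {v | v ∈ l₁} = B \ {v | v ∈ x :: l₁} by
        ext v; simp [not_or]; tauto)]

lemma prodG_reverse (hT : ∀ z, Tw p D z ≠ ⊤) (l : List V) :
    ∀ B : Set V, B ⊆ D → l.Nodup → prodG p l.reverse B = prodG p l B := by
  induction l with
  | nil => intro B _ _; rfl
  | cons x l ih =>
    intro B hB hnd
    rw [List.reverse_cons, prodG_append, ih B hB (List.nodup_cons.1 hnd).2, prodG_cons,
      prodG_cons, prodG_nil, mul_one,
      show B \ {v | v ∈ l.reverse} = B \ {v | v ∈ l} by ext v; simp,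
      ← prodG_move hT l B hB x (List.nodup_cons.1 hnd).1]
end ProdG

section Flip
variable {p : V → V → ℝ≥0∞}

lemma loop_shape {x : V} {l : List V} (h1 : l.head? = some x) (h2 : l.getLast? = some x) :
    l = [x] ∨ ∃ t, l = x :: t ++ [x] := by
  cases l with
  | nil => simp at h1
  | cons a t =>
    obtain rfl : x = a := by simpa using h1.symm
    cases t with
    | nil => exact Or.inl rfl
    | cons b t' =>
      right
      have hne : (b :: t' : List V) ≠ [] := by simp
      have hlast : (b :: t').getLast? = some x := by
        rw [List.getLast?_cons_cons] at h2; exact h2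
      exact ⟨(b :: t').dropLast, by
        rw [show x :: (b :: t').dropLast ++ [x] = x :: ((b :: t').dropLast ++ [x]) from rfl,
          List.dropLast_append_getLast? x hlast]⟩

lemma PathsIn_reverse {B : Set V} {x : V} {l : List V} (h : PathsIn B x x l) :
    PathsIn B x x l.reverse := by
  obtain ⟨h1, h2, h3⟩ := h
  refine ⟨by rw [List.head?_reverse, h2], by rw [List.getLast?_reverse, h1], ?_⟩
  rcases loop_shape h1 h2 with rfl | ⟨t, rfl⟩
  · simpa using h3
  · intro v hv
    apply h3
    rw [show (x :: t ++ [x] : List V) = (x :: t) ++ [x] from rfl, List.dropLast_concat]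
    rw [show (x :: t ++ [x] : List V).reverse = (x :: t.reverse) ++ [x] from by
        simp, List.dropLast_concat] at hv
    rcases List.mem_cons.1 hv with rfl | hv'
    · exact List.mem_cons_self
    · exact List.mem_cons_of_mem _ (by simpa using hv')

lemma Gr_flip (p : V → V → ℝ≥0∞) (B : Set V) (x : V) : Gr (flip p) B x = Gr p B x := by
  rw [Gr, Gr, PT, PT]
  let e : {l : List V // PathsIn B x x l} ≃ {l : List V // PathsIn B x x l} :=
    { toFun := fun l => ⟨l.1.reverse, PathsIn_reverse l.2⟩
      invFun := fun l => ⟨l.1.reverse, PathsIn_reverse l.2⟩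
      left_inv := fun l => Subtype.ext (by simp)
      right_inv := fun l => Subtype.ext (by simp) }
  rw [← Equiv.tsum_eq e (fun l => pathWeight p l.1)]
  refine tsum_congr fun l => ?_
  show pathWeight (flip p) l.1 = pathWeight p l.1.reverse
  exact pathWeight_reverse p l.1

lemma prodG_flip (p : V → V → ℝ≥0∞) (l : List V) : ∀ B : Set V,
    prodG (flip p) l B = prodG p l B := by
  induction l with
  | nil => intro B; rfl
  | cons x l ih => intro B; rw [prodG_cons, prodG_cons, Gr_flip, ih]

end Flip

section Xi
variable [DecidableEq V]

def XiPath (C B : Set V) (σ : List V) (l : List V) : Prop :=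
  (∀ v ∈ l.dropLast, v ∈ B) ∧ (∀ c, l.getLast? = some c → c ∈ C) ∧ loopErase l = σ

noncomputable def Xi (p : V → V → ℝ≥0∞) (C B : Set V) (σ : List V) : ℝ≥0∞ :=
  ∑' l : {l : List V // XiPath C B σ l}, pathWeight p l.1

lemma Xi_single (p : V → V → ℝ≥0∞) {C : Set V} (B : Set V) {z : V} (hz : z ∈ C) :
    Xi p C B [z] = Gr p B z := by
  rw [Xi, Gr, PT]
  refine tsum_subtype_congr (fun l => ?_) _
  constructor
  · rintro ⟨h1, h2, h3⟩
    exact ⟨by rw [← loopErase_head?, h3]; rfl, by rw [← loopErase_getLast?, h3]; rfl, h1⟩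
  · rintro ⟨h1, h2, h3⟩
    refine ⟨h3, fun c hc => ?_, by
      rw [loopErase_eq, eAcc_loop h1 h2]; rfl⟩
    rw [h2] at hc
    obtain rfl : z = c := by simpa using hc
    exact hz

lemma append_inj_last {x : V} {l₁ l₂ r₁ r₂ : List V} (h₁ : l₁.getLast? = some x)
    (h₂ : l₂.getLast? = some x) (hr₁ : x ∉ r₁) (hr₂ : x ∉ r₂)
    (h : l₁ ++ r₁ = l₂ ++ r₂) : l₁ = l₂ ∧ r₁ = r₂ := by
  have key : ∀ l₁' l₂' r₁' r₂' : List V, l₂'.getLast? = some x → x ∉ r₁' →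
      (∃ a', l₂' = l₁' ++ a' ∧ r₁' = a' ++ r₂') → l₁' = l₂' ∧ r₁' = r₂' := by
    rintro l₁' l₂' r₁' r₂' hl₂ hxr ⟨a', ha₁, ha₂⟩
    rcases eq_or_ne a' [] with rfl | hne
    · simp only [List.append_nil] at ha₁
      simp only [List.nil_append] at ha₂
      exact ⟨ha₁.symm, ha₂⟩
    · exfalso
      have hgl : l₂'.getLast? = a'.getLast? := by rw [ha₁, getLast?_append_right _ hne]
      exact hxr (ha₂ ▸ List.mem_append.2 (Or.inl (mem_of_getLast? (by rw [← hgl, hl₂]))))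
  rcases List.append_eq_append_iff.1 h with ⟨a', ha₁, ha₂⟩ | ⟨c', hc₁, hc₂⟩
  · exact key l₁ l₂ r₁ r₂ h₂ hr₁ ⟨a', ha₁, ha₂⟩
  · obtain ⟨e1, e2⟩ := key l₂ l₁ r₂ r₁ h₁ hr₂ ⟨c', hc₁, hc₂⟩
    exact ⟨e1.symm, e2.symm⟩

lemma Xi_cons (p : V → V → ℝ≥0∞) (C B : Set V) {x w : V} {σ' : List V}
    (hx : x ∈ B) (hσ' : σ' ≠ []) (hxσ' : x ∉ σ') (hw : σ'.head? = some w) :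
    Xi p C B (x :: σ') = Gr p B x * (p x w * Xi p C (B \ {x}) σ') := by
  classical
  set A := {lam : List V // PathsIn B x x lam} × {r : List V // XiPath C (B \ {x}) σ' r}
    with hA
  have hrne : ∀ r : List V, XiPath C (B \ {x}) σ' r → r ≠ [] := by
    rintro r ⟨_, _, h3⟩ rfl
    exact hσ' (by simpa using h3.symm)
  have hxr : ∀ r : List V, XiPath C (B \ {x}) σ' r → x ∉ r := by
    rintro r ⟨h1, h2, h3⟩ hxmem
    rcases mem_dropLast_or_getLast hxmem with h' | h'
    · exact (h1 x h').2 rfl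
    · apply hxσ'
      apply mem_of_getLast? (l := σ')
      rw [← h3, loopErase_getLast?, h']
  have hjoin : ∀ v : A, XiPath C B (x :: σ') (v.1.1 ++ v.2.1) := by
    rintro ⟨⟨lam, hl1, hl2, hl3⟩, ⟨r, hr⟩⟩
    show XiPath C B (x :: σ') (lam ++ r)
    have hrne' := hrne r hr
    have hxr' := hxr r hr
    refine ⟨?_, ?_, ?_⟩
    · rw [List.dropLast_append_of_ne_nil hrne']
      intro v hv
      rcases List.mem_append.1 hv with h' | h'
      · rcases mem_dropLast_or_getLast h' with h'' | h''
        · exact hl3 v h''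
        · rw [hl2] at h''
          obtain rfl : x = v := by simpa using h''
          exact hx
      · exact (hr.1 v h').1
    · intro c hc
      rw [getLast?_append_right _ hrne'] at hc
      exact hr.2.1 c hc
    · rw [loopErase_append_loop hl1 hl2 hxr', hr.2.2]
  let j : A → {l : List V // XiPath C B (x :: σ') l} := fun v => ⟨v.1.1 ++ v.2.1, hjoin v⟩
  have hinj : Function.Injective j := by
    rintro ⟨⟨l₁, hl₁⟩, ⟨r₁, hr₁⟩⟩ ⟨⟨l₂, hl₂⟩, ⟨r₂, hr₂⟩⟩ h
    have h' : l₁ ++ r₁ = l₂ ++ r₂ := congrArg Subtype.val h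
    obtain ⟨e1, e2⟩ := append_inj_last hl₁.2.1 hl₂.2.1 (hxr r₁ hr₁) (hxr r₂ hr₂) h'
    exact Prod.ext (Subtype.ext e1) (Subtype.ext e2)
  have hsurj : Function.Surjective j := by
    rintro ⟨l, hd1, hd2, hd3⟩
    have hlast : l.getLast? ≠ some x := by
      rw [← loopErase_getLast?, hd3]
      intro hc
      apply hxσ'
      rw [show (x :: σ').getLast? = σ'.getLast? from by
        cases σ' with
        | nil => exact absurd rfl hσ'
        | cons b t => rw [List.getLast?_cons_cons]] at hc
      exact mem_of_getLast? hc
    obtain ⟨lam, r, rfl, hlh, hll, hlxr, hlrne, hler⟩ := exists_loop_split hd3 hlast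
    refine ⟨⟨⟨lam, hlh, hll, ?_⟩, ⟨r, ⟨?_, ?_, hler⟩⟩⟩, rfl⟩
    · intro v hv
      apply hd1
      rw [List.dropLast_append_of_ne_nil hlrne]
      exact List.mem_append.2 (Or.inl (List.dropLast_subset _ hv))
    · intro v hv
      refine ⟨?_, fun hvx => hlxr (hvx ▸ List.dropLast_subset _ hv)⟩
      apply hd1
      rw [List.dropLast_append_of_ne_nil hlrne]
      exact List.mem_append.2 (Or.inr hv)
    · intro c hc
      apply hd2
      rwa [getLast?_append_right _ hlrne]
  rw [Xi, ← Equiv.tsum_eq (Equiv.ofBijective j ⟨hinj, hsurj⟩) (fun l => pathWeight p l.1)]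
  have hwt : ∀ v : A, pathWeight p ((j v).1)
      = pathWeight p v.1.1 * (p x w * pathWeight p v.2.1) := by
    rintro ⟨⟨lam, hl⟩, ⟨r, hr⟩⟩
    have hrh : r.head? = some w := by rw [← loopErase_head?, hr.2.2, hw]
    rw [show ((j (⟨⟨lam, hl⟩, ⟨r, hr⟩⟩ : A)).1) = lam ++ r from rfl,
      pathWeight_append p x w lam r hl.2.1 hrh, mul_assoc]
  calc ∑' v : A, pathWeight p ((Equiv.ofBijective j ⟨hinj, hsurj⟩ v).1)
      = ∑' v : A, pathWeight p v.1.1 * (p x w * pathWeight p v.2.1) :=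
        tsum_congr fun v => by exact hwt v
    _ = _ := by
        rw [tsum_prod_mul (fun lam : {lam // PathsIn B x x lam} => pathWeight p lam.1)
          (fun r : {r // XiPath C (B \ {x}) σ' r} => p x w * pathWeight p r.1),
          ENNReal.tsum_mul_left]
        rfl

lemma Xi_formula (p : V → V → ℝ≥0∞) (C : Set V) : ∀ (σ : List V) (B : Set V), σ.Nodup →
    σ ≠ [] → (∀ v ∈ σ.dropLast, v ∈ B) → (∀ c, σ.getLast? = some c → c ∈ C) →
    Xi p C B σ = pathWeight p σ * prodG p σ B := by
  intro σ
  induction σ with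
  | nil => intro B _ h; exact absurd rfl h
  | cons x σ' ih =>
    intro B hnd hne hdl hC
    cases σ' with
    | nil =>
      rw [Xi_single p B (hC x rfl), pathWeight_single, one_mul, prodG_cons, prodG_nil, mul_one]
    | cons w σ'' =>
      have hx : x ∈ B := hdl x (by rw [List.dropLast_cons₂]; exact List.mem_cons_self)
      have hxσ' : x ∉ w :: σ'' := (List.nodup_cons.1 hnd).1
      have hdl' : ∀ v ∈ (w :: σ'').dropLast, v ∈ B \ {x} := by
        intro v hv
        refine ⟨hdl v (by rw [List.dropLast_cons₂]; exact List.mem_cons_of_mem _ hv), ?_⟩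
        intro hvx
        exact hxσ' (hvx ▸ List.dropLast_subset _ hv)
      have hC' : ∀ c, (w :: σ'').getLast? = some c → c ∈ C := by
        intro c hc
        exact hC c (by rwa [List.getLast?_cons_cons])
      rw [Xi_cons p C B hx (by simp) hxσ' rfl,
        ih (B \ {x}) (List.nodup_cons.1 hnd).2 (by simp) hdl' hC',
        pathWeight_cons_cons]
      simp only [prodG_cons]
      ring

end Xi

section Fin1
variable {p : V → V → ℝ≥0∞}

lemma pathWeight_cons (p : V → V → ℝ≥0∞) {l : List V} {v : V} (z : V) (h : l.head? = some v) :
    pathWeight p (z :: l) = p z v * pathWeight p l := by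
  cases l with
  | nil => simp at h
  | cons a t =>
    obtain rfl : v = a := by simpa using h.symm
    rfl

noncomputable def Sn (p : V → V → ℝ≥0∞) (B : Set V) (m : ℕ) (z : V) : ℝ≥0∞ :=
  ∑' l : {l : List V //
    l.head? = some z ∧ (∀ v ∈ l.dropLast, v ∈ B) ∧ l.length = m + 1}, pathWeight p l.1

lemma Sn_zero (B : Set V) (z : V) : Sn p B 0 z = 1 := by
  rw [Sn, tsum_subtype_eq_single [z] ?_ _ ⟨rfl, by simp, rfl⟩]
  · rfl
  · intro l
    constructor
    · rintro ⟨h1, _, h3⟩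
      cases l with
      | nil => simp at h1
      | cons a t =>
        obtain rfl : a = z := by simpa using h1
        simp at h3
        rw [h3]
    · rintro rfl
      exact ⟨rfl, by simp, rfl⟩

lemma length_pos_tail {l : List V} {m : ℕ} (h : l.length = m + 2) : l.tail ≠ [] := by
  intro hc
  have := List.length_tail (l := l)
  rw [hc] at this
  simp at this
  omega

lemma Sn_succ (hz : z ∈ B) (m : ℕ) :
    Sn p B (m + 1) z = ∑' v, p z v * Sn p B m v := by
  classical
  set T := Σ v : V, {l : List V //
    l.head? = some v ∧ (∀ u ∈ l.dropLast, u ∈ B) ∧ l.length = m + 1} with hT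
  have hjoin : ∀ t : T, (z :: t.2.1).head? = some z ∧
      (∀ u ∈ (z :: t.2.1).dropLast, u ∈ B) ∧ (z :: t.2.1).length = m + 1 + 1 := by
    rintro ⟨v, ⟨l, h1, h2, h3⟩⟩
    refine ⟨rfl, ?_, by simp [h3]⟩
    have hlne : l ≠ [] := by rintro rfl; simp at h1
    rw [show (z :: l).dropLast = z :: l.dropLast from by
      cases l with | nil => exact absurd rfl hlne | cons a t => rfl]
    intro u hu
    rcases List.mem_cons.1 hu with rfl | hu'
    · exact hz
    · exact h2 u hu'
  let j : T → {l : List V // l.head? = some z ∧ (∀ u ∈ l.dropLast, u ∈ B) ∧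
      l.length = m + 1 + 1} := fun t => ⟨z :: t.2.1, hjoin t⟩
  have hinj : Function.Injective j := by
    rintro ⟨v₁, ⟨l₁, hl₁⟩⟩ ⟨v₂, ⟨l₂, hl₂⟩⟩ h
    have h' : z :: l₁ = z :: l₂ := congrArg Subtype.val h
    have hl : l₁ = l₂ := by injection h'
    subst hl
    obtain rfl : v₁ = v₂ := by
      have := hl₁.1.symm.trans hl₂.1
      simpa using this
    rfl
  have hsurj : Function.Surjective j := by
    rintro ⟨l, h1, h2, h3⟩
    have hlt : l.tail ≠ [] := length_pos_tail h3
    have hl : l = z :: l.tail := eq_cons_of_head? h1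
    refine ⟨⟨l.tail.head hlt, ⟨l.tail, List.head?_eq_head hlt, ?_, ?_⟩⟩, ?_⟩
    · intro u hu
      apply h2
      exact dropLast_tail_subset l u hu
    · have := List.length_tail (l := l)
      omega
    · exact Subtype.ext hl.symm
  rw [Sn, ← Equiv.tsum_eq (Equiv.ofBijective j ⟨hinj, hsurj⟩) (fun l => pathWeight p l.1)]
  have hwt : ∀ t : T, pathWeight p ((j t).1) = p z t.1 * pathWeight p t.2.1 := by
    rintro ⟨v, ⟨l, h1, h2, h3⟩⟩
    exact pathWeight_cons p z h1
  calc ∑' t : T, pathWeight p ((Equiv.ofBijective j ⟨hinj, hsurj⟩ t).1)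
      = ∑' t : T, (fun v (l : {l : List V //
          l.head? = some v ∧ (∀ u ∈ l.dropLast, u ∈ B) ∧ l.length = m + 1}) =>
          p z v * pathWeight p l.1) t.1 t.2 := tsum_congr fun t => by exact hwt t
    _ = ∑' v, ∑' l : {l : List V //
          l.head? = some v ∧ (∀ u ∈ l.dropLast, u ∈ B) ∧ l.length = m + 1},
          p z v * pathWeight p l.1 := by
        exact ENNReal.tsum_sigma (fun v (l : {l : List V //
          l.head? = some v ∧ (∀ u ∈ l.dropLast, u ∈ B) ∧ l.length = m + 1}) =>
          p z v * pathWeight p l.1)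
    _ = ∑' v, p z v * Sn p B m v := by
        refine tsum_congr fun v => ?_
        rw [ENNReal.tsum_mul_left]
        rfl

lemma Sn_succ_of_not_mem (hz : z ∉ B) (m : ℕ) : Sn p B (m + 1) z = 0 := by
  rw [Sn]
  refine tsum_subtype_zero (fun l => ?_) _
  rintro ⟨h1, h2, h3⟩
  have hlt : l.tail ≠ [] := length_pos_tail h3
  apply hz
  apply h2
  rw [eq_cons_of_head? h1, show (z :: l.tail).dropLast = z :: l.tail.dropLast from by
    cases hc : l.tail with | nil => exact absurd hc hlt | cons a t => rfl]
  exact List.mem_cons_self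

lemma Sn_mono_set {B B' : Set V} (h : B ⊆ B') (m : ℕ) (z : V) :
    Sn p B m z ≤ Sn p B' m z :=
  tsum_subtype_mono (fun l hl => ⟨hl.1, fun v hv => h (hl.2.1 v hv), hl.2.2⟩) _

lemma Sn_univ_eq_one (hstoch : IsStochastic p) : ∀ (m : ℕ) (z : V),
    Sn p Set.univ m z = 1 := by
  intro m
  induction m with
  | zero => exact fun z => Sn_zero _ _
  | succ m ih =>
    intro z
    rw [Sn_succ (Set.mem_univ z) m]
    calc ∑' v, p z v * Sn p Set.univ m v = ∑' v, p z v := tsum_congr fun v => by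
          rw [ih v, mul_one]
      _ = 1 := hstoch z

lemma Sn_le_one (hstoch : IsStochastic p) (B : Set V) (m : ℕ) (z : V) : Sn p B m z ≤ 1 := by
  rw [← Sn_univ_eq_one hstoch m z]
  exact Sn_mono_set (Set.subset_univ B) m z

lemma Sn_submul (B : Set V) (n : ℕ) : ∀ (m : ℕ) (z : V),
    Sn p B (m + n) z ≤ (⨆ v, Sn p B n v) * Sn p B m z := by
  intro m
  induction m with
  | zero =>
    intro z
    rw [zero_add, Sn_zero, mul_one]
    exact le_iSup (fun v => Sn p B n v) z
  | succ m ih =>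
    intro z
    by_cases hz : z ∈ B
    · rw [show m + 1 + n = (m + n) + 1 by omega, Sn_succ hz, Sn_succ hz]
      rw [← ENNReal.tsum_mul_left]
      refine Summable.tsum_le_tsum (fun v => ?_) ENNReal.summable ENNReal.summable
      calc p z v * Sn p B (m + n) v ≤ p z v * ((⨆ u, Sn p B n u) * Sn p B m v) :=
            mul_le_mul_right (ih v) _
        _ = (⨆ u, Sn p B n u) * (p z v * Sn p B m v) := by ring
    · rw [show m + 1 + n = (m + n) + 1 by omega, Sn_succ_of_not_mem hz]
      exact zero_le

lemma Sn_succ_le (hstoch : IsStochastic p) (B : Set V) :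
    ∀ (m : ℕ) (z : V), Sn p B (m + 1) z ≤ Sn p B m z := by
  intro m
  induction m with
  | zero =>
    intro z
    by_cases hz : z ∈ B
    · rw [Sn_succ hz, Sn_zero]
      calc ∑' v, p z v * Sn p B 0 v = ∑' v, p z v := tsum_congr fun v => by
            rw [Sn_zero, mul_one]
        _ ≤ 1 := le_of_eq (hstoch z)
    · rw [Sn_succ_of_not_mem hz]; exact zero_le
  | succ m ih =>
    intro z
    by_cases hz : z ∈ B
    · rw [Sn_succ hz, Sn_succ hz]
      exact Summable.tsum_le_tsum (fun v => mul_le_mul_right (ih v) _) ENNReal.summable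
        ENNReal.summable
    · rw [Sn_succ_of_not_mem hz]; exact zero_le

lemma Sn_anti (hstoch : IsStochastic p) (B : Set V) {k m : ℕ} (h : k ≤ m) (z : V) :
    Sn p B m z ≤ Sn p B k z := by
  induction m with
  | zero =>
    obtain rfl : k = 0 := by omega
    exact le_rfl
  | succ m ih =>
    rcases eq_or_lt_of_le h with rfl | h'
    · exact le_rfl
    · exact le_trans (Sn_succ_le hstoch B m z) (ih (by omega))

end Fin1

section Fin2
variable {p : V → V → ℝ≥0∞}

lemma p_le_one (hstoch : IsStochastic p) (u v : V) : p u v ≤ 1 :=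
  (hstoch u) ▸ ENNReal.le_tsum v

lemma tsum_prefix_ext (hstoch : IsStochastic p) {e : List V} {z c : V}
    (he : e.head? = some z) (hc : e.getLast? = some c) (m : ℕ) (hm : e.length ≤ m + 1) :
    ∑' l : {l : List V // (l.head? = some z ∧ l.length = m + 1) ∧ e <+: l}, pathWeight p l.1
      = pathWeight p e := by
  classical
  have hene : e ≠ [] := by rintro rfl; simp at he
  set T := {l' : List V // l'.head? = some c ∧ l'.length = m + 1 - e.length + 1} with hT
  have hjoin : ∀ t : T, ((e ++ t.1.tail).head? = some z ∧ (e ++ t.1.tail).length = m + 1) ∧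
      e <+: (e ++ t.1.tail) := by
    rintro ⟨l', h1, h2⟩
    have hl'ne : l' ≠ [] := by rintro rfl; simp at h1
    refine ⟨⟨by rw [head?_append_left hene, he], ?_⟩, ⟨l'.tail, rfl⟩⟩
    rw [List.length_append, List.length_tail, h2]
    have := List.length_pos_iff.2 hene
    omega
  let j : T → {l : List V // (l.head? = some z ∧ l.length = m + 1) ∧ e <+: l} :=
    fun t => ⟨e ++ t.1.tail, hjoin t⟩
  have hinj : Function.Injective j := by
    rintro ⟨l₁, hl₁⟩ ⟨l₂, hl₂⟩ h
    have h' : e ++ l₁.tail = e ++ l₂.tail := congrArg Subtype.val h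
    have ht : l₁.tail = l₂.tail := List.append_cancel_left h'
    apply Subtype.ext
    show l₁ = l₂
    rw [eq_cons_of_head? hl₁.1, eq_cons_of_head? hl₂.1, ht]
  have hsurj : Function.Surjective j := by
    rintro ⟨l, ⟨h1, h2⟩, ⟨t, rfl⟩⟩
    refine ⟨⟨c :: t, rfl, ?_⟩, Subtype.ext rfl⟩
    rw [List.length_append] at h2
    simp only [List.length_cons]
    omega
  rw [← Equiv.tsum_eq (Equiv.ofBijective j ⟨hinj, hsurj⟩) (fun l => pathWeight p l.1)]
  have hwt : ∀ t : T, pathWeight p ((j t).1) = pathWeight p e * pathWeight p t.1 := by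
    rintro ⟨l', h1, h2⟩
    exact pathWeight_join p c e l' hc h1
  calc ∑' t : T, pathWeight p ((Equiv.ofBijective j ⟨hinj, hsurj⟩ t).1)
      = ∑' t : T, pathWeight p e * pathWeight p t.1 := tsum_congr fun t => by exact hwt t
    _ = pathWeight p e * ∑' t : T, pathWeight p t.1 := ENNReal.tsum_mul_left
    _ = pathWeight p e := by
        have : ∑' t : T, pathWeight p t.1 = Sn p Set.univ (m + 1 - e.length) c := by
          rw [Sn]
          exact tsum_subtype_congr (fun l => by
            constructor
            · rintro ⟨h1, h2⟩; exact ⟨h1, by simp, h2⟩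
            · rintro ⟨h1, _, h2⟩; exact ⟨h1, h2⟩) _
        rw [this, Sn_univ_eq_one hstoch, mul_one]

lemma Sn_le_of_escape (hstoch : IsStochastic p) {B : Set V} {z : V} {e : List V}
    (he1 : e.head? = some z) (he2 : ∃ y, e.getLast? = some y ∧ y ∉ B)
    {m : ℕ} (hm : e.length ≤ m) :
    Sn p B m z ≤ 1 - pathWeight p e := by
  classical
  obtain ⟨y, hey, hyB⟩ := he2
  have hene : e ≠ [] := by rintro rfl; simp at he1
  have key : Sn p B m z + pathWeight p e ≤ 1 := by
    have h1 : (1 : ℝ≥0∞) = Sn p Set.univ m z := (Sn_univ_eq_one hstoch m z).symm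
    have hsplit := tsum_subtype_split (fun l : List V => l.head? = some z ∧ l.length = m + 1)
      (fun l => ∀ v ∈ l.dropLast, v ∈ B) (pathWeight p)
    have hSnB : Sn p B m z
        = ∑' l : {l : List V // (l.head? = some z ∧ l.length = m + 1)
            ∧ ∀ v ∈ l.dropLast, v ∈ B}, pathWeight p l.1 := by
      rw [Sn]
      exact tsum_subtype_congr (fun l => by tauto) _
    have hpre : pathWeight p e
        ≤ ∑' l : {l : List V // (l.head? = some z ∧ l.length = m + 1)
            ∧ ¬ ∀ v ∈ l.dropLast, v ∈ B}, pathWeight p l.1 := by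
      rw [← tsum_prefix_ext hstoch he1 hey m (by omega)]
      refine tsum_subtype_mono (fun l hl => ⟨hl.1, ?_⟩) _
      intro hall
      obtain ⟨t, rfl⟩ := hl.2
      have htne : t ≠ [] := by
        rintro rfl
        rw [List.append_nil] at hl
        have := hl.1.2
        omega
      apply hyB
      apply hall
      rw [List.dropLast_append_of_ne_nil htne]
      exact List.mem_append.2 (Or.inl (mem_of_getLast? hey))
    have hSuniv : Sn p Set.univ m z
        = ∑' l : {l : List V // l.head? = some z ∧ l.length = m + 1}, pathWeight p l.1 := by
      rw [Sn]
      exact tsum_subtype_congr (fun l => by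
        constructor
        · rintro ⟨h1, _, h2⟩; exact ⟨h1, h2⟩
        · rintro ⟨h1, h2⟩; exact ⟨h1, by simp, h2⟩) _
    calc Sn p B m z + pathWeight p e
        ≤ (∑' l : {l : List V // (l.head? = some z ∧ l.length = m + 1)
            ∧ ∀ v ∈ l.dropLast, v ∈ B}, pathWeight p l.1)
          + ∑' l : {l : List V // (l.head? = some z ∧ l.length = m + 1)
            ∧ ¬ ∀ v ∈ l.dropLast, v ∈ B}, pathWeight p l.1 :=
          add_le_add (le_of_eq hSnB) hpre
      _ = Sn p Set.univ m z := by rw [← hsplit, hSuniv]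
      _ = 1 := Sn_univ_eq_one hstoch m z
  exact ENNReal.le_sub_of_add_le_right
    (ne_top_of_le_ne_top ENNReal.one_ne_top (pathWeight_le_one p (p_le_one hstoch) e)) key

lemma exists_first_not_mem {D : Set V} : ∀ {l : List V}, (∃ v ∈ l, v ∉ D) →
    ∃ s w t, l = s ++ w :: t ∧ (∀ v ∈ s, v ∈ D) ∧ w ∉ D := by
  intro l
  induction l with
  | nil => rintro ⟨v, hv, _⟩; simp at hv
  | cons a l ih =>
    rintro ⟨v, hv, hvD⟩
    by_cases ha : a ∈ D
    · have : ∃ v ∈ l, v ∉ D := by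
        refine ⟨v, ?_, hvD⟩
        rcases List.mem_cons.1 hv with rfl | h'
        · exact absurd ha hvD
        · exact h'
      obtain ⟨s, w, t, rfl, hs, hw⟩ := ih this
      exact ⟨a :: s, w, t, rfl, by
        intro u hu
        rcases List.mem_cons.1 hu with rfl | h'
        · exact ha
        · exact hs u h', hw⟩
    · exact ⟨[], a, l, rfl, by simp, ha⟩

lemma exists_escape (hirr : IsIrreducibleKernel p) {D : Set V} {y₀ : V} (hy₀ : y₀ ∉ D)
    (z : V) :
    ∃ e : List V, e.head? = some z ∧ (∃ y, e.getLast? = some y ∧ y ∉ D)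
      ∧ 0 < pathWeight p e := by
  obtain ⟨l, hl1, hl2, hl3⟩ := hirr z y₀
  obtain ⟨s, w, t, rfl, hs, hw⟩ := exists_first_not_mem ⟨y₀, mem_of_getLast? hl2, hy₀⟩
  refine ⟨s ++ [w], ?_, ⟨w, by simp, hw⟩, ?_⟩
  · rw [← hl1]
    cases s with
    | nil => rfl
    | cons a s' => rfl
  · rw [pathWeight_append_cons] at hl3
    exact (ENNReal.mul_pos_iff.1 hl3).1

lemma Tw_eq_tsum_Sn (p : V → V → ℝ≥0∞) (B : Set V) (z : V) :
    Tw p B z = ∑' m, Sn p B m z := by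
  classical
  set T := Σ m : ℕ, {l : List V //
    l.head? = some z ∧ (∀ v ∈ l.dropLast, v ∈ B) ∧ l.length = m + 1} with hT
  have hjoin : ∀ t : T, t.2.1.head? = some z ∧ ∀ v ∈ t.2.1.dropLast, v ∈ B :=
    fun t => ⟨t.2.2.1, t.2.2.2.1⟩
  let j : T → {l : List V // l.head? = some z ∧ ∀ v ∈ l.dropLast, v ∈ B} :=
    fun t => ⟨t.2.1, hjoin t⟩
  have hinj : Function.Injective j := by
    rintro ⟨m₁, ⟨l₁, hl₁⟩⟩ ⟨m₂, ⟨l₂, hl₂⟩⟩ h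
    have h' : l₁ = l₂ := congrArg Subtype.val h
    subst h'
    obtain rfl : m₁ = m₂ := by
      have := hl₁.2.2.symm.trans hl₂.2.2
      omega
    rfl
  have hsurj : Function.Surjective j := by
    rintro ⟨l, h1, h2⟩
    have hlne : l ≠ [] := by rintro rfl; simp at h1
    have hlen : l.length = (l.length - 1) + 1 := by
      have := List.length_pos_iff.2 hlne
      omega
    exact ⟨⟨l.length - 1, ⟨l, h1, h2, hlen.symm ▸ rfl⟩⟩, rfl⟩
  rw [Tw, ← Equiv.tsum_eq (Equiv.ofBijective j ⟨hinj, hsurj⟩) (fun l => pathWeight p l.1)]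
  calc ∑' t : T, pathWeight p ((Equiv.ofBijective j ⟨hinj, hsurj⟩ t).1)
      = ∑' t : T, (fun (m : ℕ) (l : {l : List V //
          l.head? = some z ∧ (∀ v ∈ l.dropLast, v ∈ B) ∧ l.length = m + 1}) =>
          pathWeight p l.1) t.1 t.2 := tsum_congr fun t => by rfl
    _ = ∑' m, Sn p B m z := by
        exact ENNReal.tsum_sigma (fun (m : ℕ) (l : {l : List V //
          l.head? = some z ∧ (∀ v ∈ l.dropLast, v ∈ B) ∧ l.length = m + 1}) =>
          pathWeight p l.1)

lemma Tw_ne_top (hstoch : IsStochastic p) (hirr : IsIrreducibleKernel p) {D : Set V}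
    (hD : D.Finite) (hDne : D.Nonempty) {y₀ : V} (hy₀ : y₀ ∉ D) {B : Set V} (hB : B ⊆ D)
    (z : V) : Tw p B z ≠ ⊤ := by
  classical
  have hch : ∀ u : V, ∃ e : List V, e.head? = some u ∧ (∃ y, e.getLast? = some y ∧ y ∉ D)
      ∧ 0 < pathWeight p e := fun u => exists_escape hirr hy₀ u
  choose esc hesc1 hesc2 hesc3 using hch
  have hFDne : hD.toFinset.Nonempty := by
    obtain ⟨d, hd⟩ := hDne
    exact ⟨d, (Set.Finite.mem_toFinset hD).2 hd⟩
  set N := hD.toFinset.sup (fun u => (esc u).length) + 1 with hN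
  set ε := hD.toFinset.inf' hFDne (fun u => pathWeight p (esc u)) with hε
  have hεpos : 0 < ε := by
    rw [hε, Finset.lt_inf'_iff]
    intro u _
    exact hesc3 u
  have hlen : ∀ u ∈ D, (esc u).length ≤ N := by
    intro u hu
    have h' : (esc u).length ≤ hD.toFinset.sup (fun u => (esc u).length) :=
      Finset.le_sup (f := fun u => (esc u).length) ((Set.Finite.mem_toFinset hD).2 hu)
    omega
  have hεle : ∀ u ∈ D, ε ≤ pathWeight p (esc u) := by
    intro u hu
    exact Finset.inf'_le _ ((Set.Finite.mem_toFinset hD).2 hu)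
  have key1 : ∀ u ∈ D, ∀ m, N ≤ m → Sn p B m u ≤ 1 - ε := by
    intro u hu m hm
    calc Sn p B m u ≤ 1 - pathWeight p (esc u) := by
          refine Sn_le_of_escape hstoch (hesc1 u) ?_ (le_trans (hlen u hu) hm)
          obtain ⟨y, hy1, hy2⟩ := hesc2 u
          exact ⟨y, hy1, fun hc => hy2 (hB hc)⟩
      _ ≤ 1 - ε := tsub_le_tsub_left (hεle u hu) 1
  have hsupN : (⨆ v, Sn p B N v) ≤ 1 - ε := by
    refine iSup_le fun v => ?_
    by_cases hv : v ∈ B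
    · exact key1 v (hB hv) N le_rfl
    · rw [hN, Sn_succ_of_not_mem hv]
      exact zero_le
  have key2 : ∀ k, ∀ u : V, Sn p B (k * N) u ≤ (1 - ε) ^ k := by
    intro k
    induction k with
    | zero => intro u; rw [zero_mul, Sn_zero, pow_zero]
    | succ k ih =>
      intro u
      calc Sn p B ((k + 1) * N) u = Sn p B (k * N + N) u := by ring_nf
        _ ≤ (⨆ v, Sn p B N v) * Sn p B (k * N) u := Sn_submul B N (k * N) u
        _ ≤ (1 - ε) * (1 - ε) ^ k := mul_le_mul' hsupN (ih u)
        _ = (1 - ε) ^ (k + 1) := (mul_comm _ _).trans (pow_succ _ _).symm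
  have key3 : ∀ m, Sn p B m z ≤ (1 - ε) ^ (m / N) := by
    intro m
    calc Sn p B m z ≤ Sn p B ((m / N) * N) z :=
          Sn_anti hstoch B (Nat.div_mul_le_self m N) z
      _ ≤ (1 - ε) ^ (m / N) := key2 (m / N) z
  have hNpos : 0 < N := by omega
  haveI : NeZero N := ⟨by omega⟩
  have hgeom : ∑' m : ℕ, (1 - ε) ^ (m / N) = (N : ℝ≥0∞) * (1 - (1 - ε))⁻¹ := by
    rw [← Equiv.tsum_eq (Nat.divModEquiv N).symm (fun m : ℕ => (1 - ε) ^ (m / N))]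
    have hterm : ∀ pr : ℕ × Fin N, (1 - ε) ^ (((Nat.divModEquiv N).symm pr : ℕ) / N)
        = (fun (q : ℕ) (_ : Fin N) => (1 - ε) ^ q) pr.1 pr.2 := by
      rintro ⟨q, r⟩
      show (1 - ε) ^ ((q * N + (r : ℕ)) / N) = (1 - ε) ^ q
      rw [add_comm, Nat.add_mul_div_right _ _ hNpos, Nat.div_eq_of_lt r.2, zero_add]
    calc ∑' pr : ℕ × Fin N, (1 - ε) ^ (((Nat.divModEquiv N).symm pr : ℕ) / N)
        = ∑' pr : ℕ × Fin N, (fun (q : ℕ) (_ : Fin N) => (1 - ε) ^ q) pr.1 pr.2 :=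
          tsum_congr hterm
      _ = ∑' q : ℕ, ∑' _ : Fin N, (1 - ε) ^ q :=
          ENNReal.tsum_prod (f := fun (q : ℕ) (_ : Fin N) => (1 - ε) ^ q)
      _ = ∑' q : ℕ, (N : ℝ≥0∞) * (1 - ε) ^ q := by
          refine tsum_congr fun q => ?_
          rw [tsum_fintype, Finset.sum_const, nsmul_eq_mul]
          simp
      _ = (N : ℝ≥0∞) * ∑' q : ℕ, (1 - ε) ^ q := ENNReal.tsum_mul_left
      _ = (N : ℝ≥0∞) * (1 - (1 - ε))⁻¹ := by rw [ENNReal.tsum_geometric]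
  have hfin : (N : ℝ≥0∞) * (1 - (1 - ε))⁻¹ ≠ ⊤ := by
    refine ENNReal.mul_ne_top (ENNReal.natCast_ne_top N) (ENNReal.inv_ne_top.2 ?_)
    have h1 : (1 : ℝ≥0∞) - ε < 1 := ENNReal.sub_lt_self ENNReal.one_ne_top one_ne_zero hεpos.ne'
    intro hc
    rw [tsub_eq_zero_iff_le] at hc
    exact absurd (lt_of_le_of_lt hc h1) (lt_irrefl _)
  refine ne_top_of_le_ne_top hfin ?_
  rw [Tw_eq_tsum_Sn]
  calc ∑' m, Sn p B m z ≤ ∑' m : ℕ, (1 - ε) ^ (m / N) :=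
        Summable.tsum_le_tsum key3 ENNReal.summable ENNReal.summable
    _ = (N : ℝ≥0∞) * (1 - (1 - ε))⁻¹ := hgeom

end Fin2

section Main
variable [DecidableEq V] {p : V → V → ℝ≥0∞}

lemma mem_of_mem_stopped {D : Set V} {v0 : V} {l : List V} (hsp : IsStoppedPath D v0 l)
    {v y' : V} (hv : v ∈ l) (hl : l.getLast? = some y') (hvy : v ≠ y') : v ∈ D := by
  rcases mem_dropLast_or_getLast hv with h' | h'
  · exact hsp.2.1 v h'
  · rw [hl] at h'
    exact absurd (Option.some_injective _ h').symm hvy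

lemma shape_of_lhs {D : Set V} {v0 : V} (hv0 : v0 ∈ D) {ω l : List V} (hω : ω.Nodup)
    (hsp : IsStoppedPath D v0 l) (her : loopErase l.reverse = ω) :
    ∃ y ω', ω = y :: ω' ∧ y ∉ D ∧ ω' ≠ [] ∧ (∀ v ∈ ω', v ∈ D) ∧ ω'.getLast? = some v0 := by
  obtain ⟨hh, hdl, ⟨y', hl, hyD⟩⟩ := hsp
  have hωh : ω.head? = some y' := by
    rw [← her, loopErase_head?, List.head?_reverse, hl]
  have hωl : ω.getLast? = some v0 := by
    rw [← her, loopErase_getLast?, List.getLast?_reverse, hh]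
  refine ⟨y', ω.tail, eq_cons_of_head? hωh, hyD, ?_, ?_, ?_⟩
  · intro hc
    have : ω = [y'] := singleton_of_head?_tail hωh hc
    rw [this] at hωl
    obtain rfl : y' = v0 := by simpa using hωl
    exact hyD hv0
  · intro v hv
    have hvω : v ∈ ω := by
      rw [eq_cons_of_head? hωh]
      exact List.mem_cons_of_mem _ hv
    have hvl : v ∈ l := by
      have := loopErase_mem (her ▸ hvω)
      simpa using this
    have hvy : v ≠ y' := by
      rw [eq_cons_of_head? hωh] at hω
      rintro rfl
      exact (List.nodup_cons.1 hω).1 hv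
    exact mem_of_mem_stopped ⟨hh, hdl, ⟨y', hl, hyD⟩⟩ hvl hl hvy
  · rw [← hωl, eq_cons_of_head? hωh]
    cases hc : ω.tail with
    | nil =>
      exfalso
      have : ω = [y'] := singleton_of_head?_tail hωh hc
      rw [this] at hωl
      obtain rfl : y' = v0 := by simpa using hωl
      exact hyD hv0
    | cons b t => rw [List.getLast?_cons_cons]; rfl

lemma shape_of_rhs {D : Set V} {v0 : V} (hv0 : v0 ∈ D) {ω l : List V} (hω : ω.Nodup)
    (hsp : IsStoppedPath D v0 l) (her : (loopErase l).reverse = ω) :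
    ∃ y ω', ω = y :: ω' ∧ y ∉ D ∧ ω' ≠ [] ∧ (∀ v ∈ ω', v ∈ D) ∧ ω'.getLast? = some v0 := by
  obtain ⟨hh, hdl, ⟨y', hl, hyD⟩⟩ := hsp
  have hωh : ω.head? = some y' := by
    rw [← her, List.head?_reverse, loopErase_getLast?, hl]
  have hωl : ω.getLast? = some v0 := by
    rw [← her, List.getLast?_reverse, loopErase_head?, hh]
  refine ⟨y', ω.tail, eq_cons_of_head? hωh, hyD, ?_, ?_, ?_⟩
  · intro hc
    have : ω = [y'] := singleton_of_head?_tail hωh hc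
    rw [this] at hωl
    obtain rfl : y' = v0 := by simpa using hωl
    exact hyD hv0
  · intro v hv
    have hvω : v ∈ ω := by
      rw [eq_cons_of_head? hωh]
      exact List.mem_cons_of_mem _ hv
    have hvl : v ∈ l := loopErase_mem (by
      rw [← her] at hvω
      simpa using hvω)
    have hvy : v ≠ y' := by
      rw [eq_cons_of_head? hωh] at hω
      rintro rfl
      exact (List.nodup_cons.1 hω).1 hv
    exact mem_of_mem_stopped ⟨hh, hdl, ⟨y', hl, hyD⟩⟩ hvl hl hvy
  · rw [← hωl, eq_cons_of_head? hωh]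
    cases hc : ω.tail with
    | nil =>
      exfalso
      have : ω = [y'] := singleton_of_head?_tail hωh hc
      rw [this] at hωl
      obtain rfl : y' = v0 := by simpa using hωl
      exact hyD hv0
    | cons b t => rw [List.getLast?_cons_cons]; rfl

theorem lerw_reversal_law' [Countable V]
    (p : V → V → ℝ≥0∞) (hstoch : IsStochastic p) (hirr : IsIrreducibleKernel p)
    (D : Set V) (hD : D.Finite) (v0 : V) (hv0 : v0 ∈ D)
    (ω : List V) (hω : ω.Nodup) :
    (∑' l : {l : List V // IsStoppedPath D v0 l ∧ loopErase l.reverse = ω},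
        pathWeight p (l : List V))
      = ∑' l : {l : List V // IsStoppedPath D v0 l ∧ (loopErase l).reverse = ω},
          pathWeight p (l : List V) := by
  classical
  by_cases hsh : ∃ y ω', ω = y :: ω' ∧ y ∉ D ∧ ω' ≠ [] ∧ (∀ v ∈ ω', v ∈ D) ∧
      ω'.getLast? = some v0
  swap
  · rw [tsum_subtype_zero (P := fun l => IsStoppedPath D v0 l ∧ loopErase l.reverse = ω)
      (fun l hl => hsh (shape_of_lhs hv0 hω hl.1 hl.2)) (pathWeight p),
      tsum_subtype_zero (P := fun l => IsStoppedPath D v0 l ∧ (loopErase l).reverse = ω)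
      (fun l hl => hsh (shape_of_rhs hv0 hω hl.1 hl.2)) (pathWeight p)]
  obtain ⟨y, ω', rfl, hyD, hω'ne, hω'D, hω'last⟩ := hsh
  set q := flip p with hq
  have hω'nd : ω'.Nodup := (List.nodup_cons.1 hω).2
  have hyω' : y ∉ ω' := (List.nodup_cons.1 hω).1
  have hT : ∀ z, Tw p D z ≠ ⊤ :=
    fun z => Tw_ne_top hstoch hirr hD ⟨v0, hv0⟩ hyD (fun _ h => h) z
  obtain ⟨w1, hw1⟩ : ∃ w1, ω'.head? = some w1 := by
    cases ω' with
    | nil => exact absurd rfl hω'ne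
    | cons a t => exact ⟨a, rfl⟩
  -- Step A : LHS = q y w1 * Xi q D D ω'
  have stepA : (∑' l : {l : List V // IsStoppedPath D v0 l ∧ loopErase l.reverse = y :: ω'},
      pathWeight p (l : List V)) = q y w1 * Xi q D D ω' := by
    have hjoin : ∀ m' : {m' : List V // XiPath D D ω' m'},
        IsStoppedPath D v0 (y :: m'.1).reverse ∧
          loopErase ((y :: m'.1).reverse).reverse = y :: ω' := by
      rintro ⟨m', h1, h2, h3⟩
      have hm'ne : m' ≠ [] := by
        rintro rfl
        exact hω'ne (by simpa using h3.symm)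
      have hm'last : m'.getLast? = some v0 := by rw [← loopErase_getLast?, h3, hω'last]
      have hm'D : ∀ v ∈ m', v ∈ D := by
        intro v hv
        rcases mem_dropLast_or_getLast hv with h' | h'
        · exact h1 v h'
        · exact h2 v h'
      have hym' : y ∉ m' := fun hc => hyD (hm'D y hc)
      refine ⟨⟨?_, ?_, ⟨y, ?_, hyD⟩⟩, ?_⟩
      · rw [List.head?_reverse, show (y :: m').getLast? = m'.getLast? from by
          cases m' with
          | nil => exact absurd rfl hm'ne
          | cons b t => rw [List.getLast?_cons_cons], hm'last]
      · rw [List.dropLast_reverse, List.tail_cons]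
        intro v hv
        exact hm'D v (by simpa using hv)
      · rw [List.getLast?_reverse]
        rfl
      · rw [List.reverse_reverse, loopErase_cons_of_not_mem hym', h3]
    let j : {m' : List V // XiPath D D ω' m'} →
        {l : List V // IsStoppedPath D v0 l ∧ loopErase l.reverse = y :: ω'} :=
      fun m' => ⟨(y :: m'.1).reverse, hjoin m'⟩
    have hinj : Function.Injective j := by
      rintro ⟨m₁, hm₁⟩ ⟨m₂, hm₂⟩ h
      have h' : (y :: m₁).reverse = (y :: m₂).reverse := congrArg Subtype.val h
      have := List.reverse_injective h'
      exact Subtype.ext (by injection this)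
    have hsurj : Function.Surjective j := by
      rintro ⟨l, hsp, her⟩
      have hlrh : l.reverse.head? = some y := by
        rw [← loopErase_head?, her]
        rfl
      have hlr : l.reverse = y :: l.reverse.tail := eq_cons_of_head? hlrh
      have htl : l.reverse.tail = l.dropLast.reverse := List.tail_reverse (l := l)
      have htlD : ∀ v ∈ l.reverse.tail, v ∈ D := by
        intro v hv
        rw [htl] at hv
        exact hsp.2.1 v (by simpa using hv)
      have hym' : y ∉ l.reverse.tail := fun hc => hyD (htlD y hc)
      have herm : loopErase l.reverse = y :: loopErase l.reverse.tail := by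
        rw [hlr, loopErase_cons_of_not_mem hym', ← hlr]
      have h3 : loopErase l.reverse.tail = ω' := by
        rw [her] at herm
        exact (by injection herm : _root_.id (ω' = loopErase l.reverse.tail)).symm
      refine ⟨⟨l.reverse.tail, ?_, ?_, h3⟩, ?_⟩
      · intro v hv
        exact htlD v (List.dropLast_subset _ hv)
      · intro c hc
        rw [← loopErase_getLast?, h3, hω'last] at hc
        obtain rfl : v0 = c := by simpa using hc
        exact hv0
      · apply Subtype.ext
        show (y :: l.reverse.tail).reverse = l
        rw [← hlr, List.reverse_reverse]
    rw [← Equiv.tsum_eq (Equiv.ofBijective j ⟨hinj, hsurj⟩)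
      (fun l : {l : List V // IsStoppedPath D v0 l ∧ loopErase l.reverse = y :: ω'} =>
        pathWeight p (l : List V))]
    have hwt : ∀ m' : {m' : List V // XiPath D D ω' m'},
        pathWeight p ((j m').1) = q y w1 * pathWeight q m'.1 := by
      rintro ⟨m', hm'⟩
      have hm'h : m'.head? = some w1 := by rw [← loopErase_head?, hm'.2.2, hw1]
      show pathWeight p (y :: m').reverse = q y w1 * pathWeight q m'
      rw [← pathWeight_reverse, ← hq, pathWeight_cons q y hm'h]
    calc ∑' m' : {m' : List V // XiPath D D ω' m'},
        pathWeight p ((Equiv.ofBijective j ⟨hinj, hsurj⟩ m').1)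
        = ∑' m' : {m' : List V // XiPath D D ω' m'}, q y w1 * pathWeight q m'.1 :=
          tsum_congr fun m' => by exact hwt m'
      _ = q y w1 * Xi q D D ω' := by rw [ENNReal.tsum_mul_left]; rfl
  -- Step C : RHS = Xi p Dᶜ D (ω'.reverse ++ [y])
  have stepC : (∑' l : {l : List V // IsStoppedPath D v0 l ∧ (loopErase l).reverse = y :: ω'},
      pathWeight p (l : List V)) = Xi p {v | v ∉ D} D (ω'.reverse ++ [y]) := by
    rw [Xi]
    refine tsum_subtype_congr (fun l => ?_) _
    have hrev : (y :: ω').reverse = ω'.reverse ++ [y] := by simp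
    constructor
    · rintro ⟨⟨hh, hdl, ⟨y', hl, hy'D⟩⟩, her⟩
      have her' : loopErase l = ω'.reverse ++ [y] := by
        rw [← hrev, ← List.reverse_eq_iff.1 her]
      refine ⟨hdl, ?_, her'⟩
      intro c hc
      rw [hl] at hc
      obtain rfl : y' = c := by simpa using hc
      exact hy'D
    · rintro ⟨h1, h2, h3⟩
      have hlh : l.head? = some v0 := by
        rw [← loopErase_head?, h3, ← hrev, List.head?_reverse,
          show (y :: ω').getLast? = ω'.getLast? from by
            cases ω' with
            | nil => exact absurd rfl hω'ne
            | cons b t => rw [List.getLast?_cons_cons], hω'last]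
      have hll : l.getLast? = some y := by
        rw [← loopErase_getLast?, h3, getLast?_append_right _ (by simp)]
        rfl
      exact ⟨⟨hlh, h1, ⟨y, hll, h2 y hll⟩⟩, by rw [List.reverse_eq_iff, h3, hrev]⟩
  rw [stepA, stepC]
  -- Step B / D : apply the product formula on both sides
  rw [Xi_formula q D ω' D hω'nd hω'ne (fun v hv => hω'D v (List.dropLast_subset _ hv))
      (fun c hc => by
        rw [hω'last] at hc
        obtain rfl : v0 = c := by simpa using hc
        exact hv0),
    Xi_formula p {v | v ∉ D} (ω'.reverse ++ [y]) D
      (by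
        rw [List.nodup_append]
        refine ⟨List.nodup_reverse.2 hω'nd, List.nodup_singleton y, ?_⟩
        intro v hv w hvy hvw
        rw [List.mem_singleton.1 hvy] at hvw
        rw [hvw] at hv
        exact hyω' (List.mem_reverse.1 hv))
      (by simp)
      (by
        rw [List.dropLast_concat]
        intro v hv
        exact hω'D v (by simpa using hv))
      (fun c hc => by
        rw [getLast?_append_right _ (by simp)] at hc
        obtain rfl : y = c := by simpa using hc
        exact hyD)]
  -- Now both sides are products; identify them.
  have e1 : q y w1 * pathWeight q ω' = pathWeight p (ω'.reverse ++ [y]) := by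
    rw [← pathWeight_cons q y hw1, hq, pathWeight_reverse]
    congr 1
    simp
  have e2 : prodG q ω' D = prodG p ω' D := prodG_flip p ω' D
  have e3 : prodG p (ω'.reverse ++ [y]) D = prodG p ω' D := by
    rw [prodG_append, prodG_cons, prodG_nil, mul_one,
      Gr_of_not_mem (fun hc => hyD hc.1), mul_one]
    exact prodG_reverse hT ω' D (fun _ h => h) hω'nd
  rw [e3, ← e1, e2]
  ring

end Main

/-- for the (not necessarily reversible) natural random walk started in a
bounded domain `D` and stopped on exiting `D`, the law of the loop erasure of the
time reversal of the stopped walk equals the law of the time reversal of its loop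
erasure: for every self-avoiding path `ω`,
`P(L[(S(0),…,S(τ_D))⁻] = ω) = P(L[(S(0),…,S(τ_D))]⁻ = ω)`. -/
theorem lerw_reversal_law [DecidableEq V] [Countable V]
    (p : V → V → ℝ≥0∞) (hstoch : IsStochastic p) (hirr : IsIrreducibleKernel p)
    (D : Set V) (hD : D.Finite) (v0 : V) (hv0 : v0 ∈ D)
    (ω : List V) (hω : ω.Nodup) :
    (∑' l : {l : List V // IsStoppedPath D v0 l ∧ loopErase l.reverse = ω},
        pathWeight p (l : List V))
      = ∑' l : {l : List V // IsStoppedPath D v0 l ∧ (loopErase l).reverse = ω},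
          pathWeight p (l : List V) := by
  exact lerw_reversal_law' p hstoch hirr D hD v0 hv0 ω hω
end

section
/- Let D ⊊ ℂ be simply connected, a, b distinct prime ends, φ : D → ℍ conformal with φ(a) = 0, φ(b) = ∞, γ a simple curve from a to b with Loewner chain φ_t = g_t ∘ φ and driving function U, and p(t) = φ_t⁻¹(U(t) + i). Given T > 1 and ε > 0, set T̃ = sup{t ∈ [0,T] : |U(t)| < 1/ε}. Then for all t' ≤ t < T̃: |φ(p(t)) − φ(γ(t'))| ≥ (1/2)e^{−4T̃}. -/
open Set

/-- let `D ⊊ ℂ` be simply connected with prime ends `a ≠ b`,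
`φ : D → ℍ` conformal with `φ(a) = 0`, `φ(b) = ∞`, `γ` a simple curve from `a` to `b`
with Loewner chain `g_t` (so `φ_t = g_t ∘ φ`), driving function `U`, and reference
point `p(t) = φ_t⁻¹(U(t) + i)`.  Given `T > 1`, `ε > 0` and
`T̃ = sup{t ∈ [0,T] : |U(t)| < 1/ε}`, for all `t' ≤ t < T̃`:
`|φ(p(t)) − φ(γ(t'))| ≥ (1/2) e^{−4T̃}`. -/
theorem reference_point_far_from_curve
    (D : Set ℂ) (hD : IsOpen D ∧ D.Nonempty ∧ D ≠ Set.univ ∧ SimplyConnectedSpace ↥D)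
    (φ : ℂ → ℂ) (hφ : DifferentiableOn ℂ φ D ∧ Set.InjOn φ D ∧ φ '' D = UpperHalf)
    (γ pp : ℝ → ℂ) (g : ℝ → ℂ → ℂ) (U : ℝ → ℝ) (hU : Continuous U)
    (hg0 : ∀ ζ : ℂ, g 0 ζ = ζ)
    (T ε Ttil : ℝ) (hT : 1 < T) (hε : 0 < ε)
    (hTtil : Ttil = sSup {s : ℝ | s ∈ Set.Icc 0 T ∧ |U s| < 1 / ε})
    (t t' : ℝ) (ht' : 0 ≤ t') (ht't : t' ≤ t) (htT : t < Ttil)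
    (hzim : 0 < (φ (γ t')).im)
    -- the Loewner evolution of `w = φ(p(t))`, with `φ_t(p(t)) = U(t) + i`
    (hwode : ∀ s ∈ Set.Icc (0:ℝ) t,
      HasDerivAt (fun τ => g τ (φ (pp t))) (2 / (g s (φ (pp t)) - U s)) s)
    (hwt : g t (φ (pp t)) = (U t : ℂ) + Complex.I)
    -- the Loewner evolution of `z = φ(γ(t'))`, swallowed at time `t'`
    (hzode : ∀ s ∈ Set.Ico (0:ℝ) t',
      HasDerivAt (fun τ => g τ (φ (γ t'))) (2 / (g s (φ (γ t')) - U s)) s)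
    (hzcont : ContinuousOn (fun τ => g τ (φ (γ t'))) (Set.Icc 0 t'))
    (hzt : g t' (φ (γ t')) = (U t' : ℂ)) :
    2⁻¹ * Real.exp (-(4 * Ttil)) ≤ ‖φ (pp t) - φ (γ t')‖ := by
  have h0t : (0:ℝ) ≤ t := le_trans ht' ht't
  set w := φ (pp t) with hwdef
  set z := φ (γ t') with hzdef
  set h : ℝ → ℝ := fun s => (g s w).im with hhdef
  set k : ℝ → ℝ := fun s => (g s z).im with hkdef
  -- continuity of the flow of `w`
  have hcontw : ContinuousOn (fun s => g s w) (Icc 0 t) := fun s hs =>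
    (hwode s hs).continuousAt.continuousWithinAt
  have hhcont : ContinuousOn h (Icc 0 t) :=
    Complex.continuous_im.comp_continuousOn hcontw
  -- derivative of `h`
  have hh_deriv : ∀ s ∈ Icc (0:ℝ) t,
      HasDerivAt h (2 / (g s w - (U s : ℂ))).im s := fun s hs => by
    have := Complex.imCLM.hasFDerivAt.comp_hasDerivAt s (hwode s hs)
    exact this
  have himA : ∀ s : ℝ, (g s w - (U s : ℂ)).im = h s := by
    intro s; simp [hhdef]
  -- `h ^ 2` is antitone on `[0, t]`
  have hH_deriv : ∀ s ∈ Icc (0:ℝ) t,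
      HasDerivAt (fun s => h s ^ 2)
        ((2:ℕ) * h s ^ 1 * (2 / (g s w - (U s : ℂ))).im) s := fun s hs =>
    (hh_deriv s hs).pow 2
  have hH_nonpos : ∀ s ∈ Icc (0:ℝ) t,
      ((2:ℕ) * h s ^ 1 * (2 / (g s w - (U s : ℂ))).im) ≤ 0 := by
    intro s hs
    have him : (2 / (g s w - (U s : ℂ))).im
        = 2 * (-(h s) / Complex.normSq (g s w - (U s : ℂ))) := by
      rw [div_eq_mul_inv, Complex.mul_im, Complex.inv_im, himA s]
      norm_num
    rw [him]
    have hnsq : 0 ≤ Complex.normSq (g s w - (U s : ℂ)) := Complex.normSq_nonneg _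
    rw [pow_one]
    have : (2:ℝ) * h s * (2 * (-(h s) / Complex.normSq (g s w - (U s : ℂ))))
        = -(4 * h s ^ 2) / Complex.normSq (g s w - (U s : ℂ)) := by ring
    push_cast
    rw [this]
    apply div_nonpos_of_nonpos_of_nonneg _ hnsq
    nlinarith [sq_nonneg (h s)]
  have hH_anti : AntitoneOn (fun s => h s ^ 2) (Icc 0 t) := by
    apply antitoneOn_of_deriv_nonpos (convex_Icc 0 t)
    · exact (hhcont.pow 2)
    · intro s hs
      rw [interior_Icc] at hs
      exact ((hH_deriv s (Ioo_subset_Icc_self hs)).differentiableAt).differentiableWithinAt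
    · intro s hs
      rw [interior_Icc] at hs
      rw [(hH_deriv s (Ioo_subset_Icc_self hs)).deriv]
      exact hH_nonpos s (Ioo_subset_Icc_self hs)
  have hht : h t = 1 := by simp [hhdef, hwt]
  have hH_ge : ∀ s ∈ Icc (0:ℝ) t, 1 ≤ h s ^ 2 := by
    intro s hs
    have h2 := hH_anti hs (right_mem_Icc.2 h0t) hs.2
    simp only at h2
    rw [hht, one_pow] at h2
    exact h2
  -- `h ≥ 1` on `[0, t]`
  have hh_ge : ∀ s ∈ Icc (0:ℝ) t, 1 ≤ h s := by
    intro s hs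
    by_contra hlt
    push_neg at hlt
    have hneg : h s ≤ -1 := by
      rcases le_or_gt (h s) (-1) with h1 | h1
      · exact h1
      · nlinarith [hH_ge s hs]
    have hsub : Icc s t ⊆ Icc 0 t := Icc_subset_Icc hs.1 le_rfl
    have : (0:ℝ) ∈ h '' Icc s t := by
      apply intermediate_value_Icc hs.2 (hhcont.mono hsub)
      constructor <;> [linarith; linarith [hht]]
    obtain ⟨c, hc, hc0⟩ := this
    have := hH_ge c (hsub hc)
    rw [hc0] at this
    norm_num at this
  -- the stopping time τ
  have hkcont : ContinuousOn k (Icc 0 t') :=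
    Complex.continuous_im.comp_continuousOn hzcont
  have hkt' : k t' = 0 := by simp [hkdef, hzt]
  set S : Set ℝ := {s | s ∈ Icc (0:ℝ) t' ∧ k s ≤ 1/2} with hSdef
  have hSne : S.Nonempty := ⟨t', ⟨⟨ht', le_rfl⟩, by rw [hkt']; norm_num⟩⟩
  have hSbdd : BddBelow S := ⟨0, fun x hx => hx.1.1⟩
  have hSclosed : IsClosed S := by
    have : S = Icc 0 t' ∩ k ⁻¹' Iic (1/2) := by
      ext x; simp [hSdef]
    rw [this]
    exact hkcont.preimage_isClosed_of_isClosed isClosed_Icc isClosed_Iic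
  set τ := sInf S with hτdef
  have hτS : τ ∈ S := hSclosed.csInf_mem hSne hSbdd
  have hτ0 : 0 ≤ τ := hτS.1.1
  have hτt' : τ ≤ t' := hτS.1.2
  have hτk : k τ ≤ 1/2 := hτS.2
  have hkbig : ∀ s ∈ Ico (0:ℝ) τ, 1/2 < k s := by
    intro s hs
    by_contra hle
    push_neg at hle
    have : s ∈ S := ⟨⟨hs.1, le_trans hs.2.le hτt'⟩, hle⟩
    exact absurd (csInf_le hSbdd this) (not_le.2 hs.2)
  -- Gronwall
  set y : ℝ → ℂ := fun s => g s w - g s z with hydef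
  have hIccsub : Icc (0:ℝ) τ ⊆ Icc 0 t := Icc_subset_Icc le_rfl (le_trans hτt' ht't)
  have hIccsub' : Icc (0:ℝ) τ ⊆ Icc 0 t' := Icc_subset_Icc le_rfl hτt'
  have hycont : ContinuousOn y (Icc 0 τ) :=
    (hcontw.mono hIccsub).sub (hzcont.mono hIccsub')
  have hyderiv : ∀ s ∈ Ico (0:ℝ) τ,
      HasDerivWithinAt y
        (2 / (g s w - (U s : ℂ)) - 2 / (g s z - (U s : ℂ))) (Ici s) s := by
    intro s hs
    have hs1 : s ∈ Icc (0:ℝ) t := ⟨hs.1, le_trans hs.2.le (le_trans hτt' ht't)⟩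
    have hs2 : s ∈ Ico (0:ℝ) t' := ⟨hs.1, lt_of_lt_of_le hs.2 hτt'⟩
    exact ((hwode s hs1).sub (hzode s hs2)).hasDerivWithinAt
  have hbound : ∀ s ∈ Ico (0:ℝ) τ,
      ‖2 / (g s w - (U s : ℂ)) - 2 / (g s z - (U s : ℂ))‖ ≤ 4 * ‖y s‖ + 0 := by
    intro s hs
    set A := g s w - (U s : ℂ) with hAdef
    set B := g s z - (U s : ℂ) with hBdef
    have hs1 : s ∈ Icc (0:ℝ) t := ⟨hs.1, le_trans hs.2.le (le_trans hτt' ht't)⟩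
    have hA1 : 1 ≤ ‖A‖ := by
      calc (1:ℝ) ≤ h s := hh_ge s hs1
        _ ≤ |A.im| := by rw [himA s]; exact le_abs_self _
        _ ≤ ‖A‖ := Complex.abs_im_le_norm A
    have hB1 : 1/2 ≤ ‖B‖ := by
      have hB : B.im = k s := by simp [hBdef, hkdef]
      calc (1:ℝ)/2 ≤ k s := (hkbig s hs).le
        _ ≤ |B.im| := by rw [hB]; exact le_abs_self _
        _ ≤ ‖B‖ := Complex.abs_im_le_norm B
    have hA0 : A ≠ 0 := by
      intro h0; rw [h0] at hA1; norm_num at hA1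
    have hB0 : B ≠ 0 := by
      intro h0; rw [h0] at hB1; norm_num at hB1
    have heq : 2 / A - 2 / B = (-2) * y s / (A * B) := by
      have : y s = A - B := by simp [hydef, hAdef, hBdef]
      rw [this]
      field_simp
      ring
    rw [heq, add_zero]
    rw [norm_div, norm_mul, norm_mul]
    have habs : ‖(-2 : ℂ)‖ = 2 := by norm_num
    rw [habs]
    have hABpos : (0:ℝ) < ‖A‖ * ‖B‖ := by
      apply mul_pos <;> [positivity; positivity]
    rw [div_le_iff₀ hABpos]
    have h2 : (1:ℝ)/2 ≤ ‖A‖ * ‖B‖ := by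
      calc (1:ℝ)/2 = 1 * (1/2) := by norm_num
        _ ≤ ‖A‖ * ‖B‖ := by
            apply mul_le_mul hA1 hB1 (by norm_num)
            exact le_trans zero_le_one hA1
    nlinarith [norm_nonneg (y s)]
  have hgron := norm_le_gronwallBound_of_norm_deriv_right_le hycont hyderiv
    (le_refl ‖y 0‖) hbound τ ⟨hτ0, le_rfl⟩
  rw [gronwallBound_ε0, sub_zero] at hgron
  -- lower bound on ‖y τ‖
  have hτt : τ ∈ Icc (0:ℝ) t := ⟨hτ0, le_trans hτt' ht't⟩
  have hyτ : 1/2 ≤ ‖y τ‖ := by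
    have him : (y τ).im = h τ - k τ := by simp [hydef, hhdef, hkdef]
    calc (1:ℝ)/2 ≤ h τ - k τ := by linarith [hh_ge τ hτt, hτk]
      _ = (y τ).im := him.symm
      _ ≤ |(y τ).im| := le_abs_self _
      _ ≤ ‖y τ‖ := Complex.abs_im_le_norm _
  -- conclude
  have hy0 : y 0 = w - z := by simp [hydef, hg0]
  have hmain : 1/2 ≤ ‖w - z‖ * Real.exp (4 * τ) := by
    rw [← hy0]
    exact le_trans hyτ hgron
  have hτTtil : τ ≤ Ttil := le_trans hτt' (le_trans ht't htT.le)
  have hexp : Real.exp (-(4 * Ttil)) ≤ Real.exp (-(4 * τ)) := by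
    apply Real.exp_le_exp.2
    linarith
  have hNτ : 2⁻¹ * Real.exp (-(4 * τ)) ≤ ‖w - z‖ := by
    rw [Real.exp_neg, ← div_eq_mul_inv, div_le_iff₀ (Real.exp_pos _)]
    linarith
  calc 2⁻¹ * Real.exp (-(4 * Ttil)) ≤ 2⁻¹ * Real.exp (-(4 * τ)) :=
        mul_le_mul_of_nonneg_left hexp (by norm_num)
    _ ≤ ‖w - z‖ := hNτ
end
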